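/- arXiv:2404.15017 — 4 statements merged into one kernel-verified Lean document; each statement's English description precedes it below -/
import Mathlib

section
/- Let ε_1,…,ε_T be i.i.d. random vectors in R^p whose p coordinate time series are jointly independent (the null H_0), let X_1,…,X_T be arbitrary random vectors in R^k, let L ∈ R^{p×k} be deterministic, and set Y_t = L X_t + ε_t. Let [p] = G_1 ⊔ G_2 be a deterministic partition such that L_{G_i}ᵀ L_{G_i} is invertible for i = 1,2, let H_i = I − L_{G_i}(L_{G_i}ᵀ L_{G_i})⁻¹ L_{G_i}ᵀ, and define the estimated residuals ε̂_{t,G_i} := H_i Y_{t,G_i} for all t ∈ [T], i ∈ {1,2}. For r = 1,…,R let π_1^{(r)}, π_2^{(r)} be i.i.d. uniformly random permutations of [T], independent of all data, and let ε̃^{(r)} ∈ R^{T×p} be obtained from ε̂ by applying π_i^{(r)} to the rows of the columns in G_i, separately for i = 1,2. Then for every measurable test statistic S : R^{T×p} → R, the p-value p_val = (1 + Σ_{r=1}^R 1{S(ε̂) ≤ S(ε̃^{(r)})})/(R+1) satisfies P(p_val ≤ α) ≤ α for every α ∈ (0,1). -/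
open MeasureTheory ProbabilityTheory Matrix

instance permMeasurableSpace {α : Type*} : MeasurableSpace (Equiv.Perm α) := ⊤

/-- The uniform probability measure on the permutations of a finite type. -/
noncomputable def uniformPermMeasure (α : Type*) [Fintype α] [DecidableEq α] :
    Measure (Equiv.Perm α) :=
  haveI : Nonempty (Equiv.Perm α) := ⟨1⟩
  (PMF.uniformOfFintype (Equiv.Perm α)).toMeasure

section MosaicAux
open Set
noncomputable section

/-- deterministic counting lemma -/
lemma mosaic_count_le {n : ℕ} (v : Fin n → ℝ) (m : ℕ) :
    ((Finset.univ.filter fun j =>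
      ((Finset.univ.filter fun s => v j ≤ v s).card ≤ m)).card ≤ m) := by
  classical
  set A := Finset.univ.filter fun j =>
    ((Finset.univ.filter fun s => v j ≤ v s).card ≤ m) with hA
  rcases A.eq_empty_or_nonempty with h | h
  · simp [h]
  · obtain ⟨j0, hj0, hmin⟩ := A.exists_min_image v h
    have hsub : A ⊆ Finset.univ.filter fun s => v j0 ≤ v s := by
      intro x hx
      exact Finset.mem_filter.2 ⟨Finset.mem_univ x, hmin x hx⟩
    have hj0' : (Finset.univ.filter fun s => v j0 ≤ v s).card ≤ m :=
      (Finset.mem_filter.1 hj0).2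
    exact le_trans (Finset.card_le_card hsub) hj0'

/-- every subset of a countable pi-of-perms type is measurable -/
lemma permPi_measurableSet {n R T : ℕ} (s : Set (Fin n × Fin R → Equiv.Perm (Fin T))) :
    MeasurableSet s := by
  have hsing : ∀ g : Fin n × Fin R → Equiv.Perm (Fin T), MeasurableSet ({g} : Set _) := by
    intro g
    have : ({g} : Set _) = ⋂ ir, (fun f => f ir) ⁻¹' {g ir} := by
      ext f; simp [funext_iff, Set.mem_iInter, eq_comm]
    rw [this]
    exact MeasurableSet.iInter fun ir => measurable_pi_apply ir (by trivial)
  have hs : s = ⋃ g ∈ s, ({g} : Set _) := by simp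
  rw [hs]
  exact MeasurableSet.biUnion (Set.to_countable s) fun g _ => hsing g

open scoped Classical in
lemma permPi_measure_eq_sum {n R T : ℕ} (m : Measure (Fin n × Fin R → Equiv.Perm (Fin T)))
    (s : Set (Fin n × Fin R → Equiv.Perm (Fin T))) :
    m s = ∑ g ∈ Finset.univ.filter (· ∈ s), m {g} := by
  have hs : s = ⋃ g ∈ Finset.univ.filter (· ∈ s), ({g} : Set _) := by ext g; simp
  have hd : (↑(Finset.univ.filter (· ∈ s)) : Set _).PairwiseDisjoint
      (fun g => ({g} : Set (Fin n × Fin R → Equiv.Perm (Fin T)))) := by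
    intro g _ g' hg' hne
    simp [Set.disjoint_singleton, hne]
  have h2 := measure_biUnion_finset (μ := m) hd (fun g _ => permPi_measurableSet {g})
  rw [← hs] at h2
  exact h2

instance uniformPermMeasure_prob {α : Type*} [Fintype α] [DecidableEq α] :
    IsProbabilityMeasure (uniformPermMeasure α) := by
  haveI : Nonempty (Equiv.Perm α) := ⟨1⟩
  unfold uniformPermMeasure
  infer_instance

lemma uniformPermMeasure_singleton {T : ℕ} (x : Equiv.Perm (Fin T)) :
    uniformPermMeasure (Fin T) {x} =
      (Fintype.card (Equiv.Perm (Fin T)) : ENNReal)⁻¹ := by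
  haveI : Nonempty (Equiv.Perm (Fin T)) := ⟨1⟩
  rw [uniformPermMeasure, PMF.toMeasure_apply_singleton _ x (by trivial),
    PMF.uniformOfFintype_apply]

lemma permPi_singleton {n R T : ℕ} (g : Fin n × Fin R → Equiv.Perm (Fin T)) :
    Measure.pi (fun _ : Fin n × Fin R => uniformPermMeasure (Fin T)) {g} =
      ((Fintype.card (Equiv.Perm (Fin T)) : ENNReal)⁻¹) ^ (Fintype.card (Fin n × Fin R)) := by
  have : ({g} : Set _) = Set.pi Set.univ (fun ir => {g ir}) := by
    ext f; simp [funext_iff, Set.mem_pi]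
  rw [this, Measure.pi_pi]
  rw [Finset.prod_congr rfl fun ir _ => uniformPermMeasure_singleton (g ir),
    Finset.prod_const]
  rfl

open scoped Classical in
lemma permPi_map_bij {n R T : ℕ} (Φ : (Fin n × Fin R → Equiv.Perm (Fin T)) →
      (Fin n × Fin R → Equiv.Perm (Fin T))) (hΦ : Function.Bijective Φ)
    (s : Set (Fin n × Fin R → Equiv.Perm (Fin T))) :
    Measure.pi (fun _ : Fin n × Fin R => uniformPermMeasure (Fin T)) (Φ ⁻¹' s) =
      Measure.pi (fun _ : Fin n × Fin R => uniformPermMeasure (Fin T)) s := by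
  rw [permPi_measure_eq_sum _ (Φ ⁻¹' s), permPi_measure_eq_sum _ s]
  simp only [permPi_singleton]
  rw [Finset.sum_const, Finset.sum_const]
  congr 1
  refine Finset.card_bij (fun g _ => Φ g) ?_ ?_ ?_
  · intro g hg; simp only [Finset.mem_filter, Finset.mem_univ, true_and] at hg ⊢
    exact hg
  · intro g₁ _ g₂ _ h; exact hΦ.1 h
  · intro g' hg'; simp only [Finset.mem_filter, Finset.mem_univ, true_and] at hg'
    obtain ⟨g, rfl⟩ := hΦ.2 g'
    exact ⟨g, by simpa using hg', rfl⟩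

/-- two probability measures on a finite-dimensional matrix space agreeing on all
boxes are equal -/
lemma mosaic_measure_ext_boxes {T p : ℕ} {m1 m2 : Measure (Fin T → Fin p → ℝ)}
    [IsProbabilityMeasure m1] [IsProbabilityMeasure m2]
    (h : ∀ B : Fin T → Fin p → Set ℝ, (∀ t j, MeasurableSet (B t j)) →
      m1 (Set.pi Set.univ fun t => Set.pi Set.univ (B t)) =
      m2 (Set.pi Set.univ fun t => Set.pi Set.univ (B t))) :
    m1 = m2 := by
  classical
  set C : Fin T → Set (Set (Fin p → ℝ)) :=
    fun _ => Set.pi Set.univ '' Set.pi Set.univ (fun _ : Fin p => {s : Set ℝ | MeasurableSet s})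
    with hC
  have hCgen : ∀ t, MeasurableSpace.generateFrom (C t) = (by infer_instance) :=
    fun _ => generateFrom_pi
  have hCspan : ∀ t, IsCountablySpanning (C t) := by
    intro t
    refine ⟨fun _ => Set.univ, fun n => ?_, Set.iUnion_const _⟩
    exact ⟨fun _ => Set.univ, fun j _ => by simp, by simp⟩
  have hgen : MeasurableSpace.generateFrom
      (Set.pi Set.univ '' Set.pi Set.univ C) = (by infer_instance) :=
    generateFrom_eq_pi hCgen hCspan
  have hpi : IsPiSystem (Set.pi Set.univ '' Set.pi Set.univ C) :=
    IsPiSystem.pi fun t => isPiSystem_pi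
  refine ext_of_generate_finite _ hgen.symm hpi ?_ (by simp)
  rintro _ ⟨f, hf, rfl⟩
  have hBex : ∀ t, ∃ B : Fin p → Set ℝ, (∀ j, MeasurableSet (B j)) ∧
      f t = Set.pi Set.univ B := by
    intro t
    obtain ⟨B, hB, hfB⟩ := hf t (Set.mem_univ t)
    exact ⟨B, fun j => hB j (Set.mem_univ j), hfB.symm⟩
  choose B hBmeas hfB using hBex
  have hf2 : f = fun t => Set.pi Set.univ (B t) := funext hfB
  rw [hf2]
  exact h B (fun t j => hBmeas t j)

/-- box probabilities factor completely under H₀ -/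
lemma mosaic_box_prob {Ω : Type*} [MeasurableSpace Ω] (μ : Measure Ω) {T p : ℕ}
    (ε : Ω → Fin T → Fin p → ℝ)
    (hrow_indep : iIndepFun (fun t ω => ε ω t) μ)
    (hcol_indep : iIndepFun (fun j ω => fun t => ε ω t j) μ)
    (B : Fin T → Fin p → Set ℝ) (hB : ∀ t j, MeasurableSet (B t j)) :
    μ {ω | ∀ t j, ε ω t j ∈ B t j} =
      ∏ j : Fin p, ∏ t : Fin T, μ {ω | ε ω t j ∈ B t j} := by
  classical
  have hcols := hcol_indep.measure_inter_preimage_eq_mul Finset.univ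
    (sets := fun j => {x : Fin T → ℝ | ∀ t, x t ∈ B t j})
    (fun j _ => by
      have : {x : Fin T → ℝ | ∀ t, x t ∈ B t j} = Set.pi Set.univ (fun t => B t j) := by
        ext x; simp [Set.mem_pi]
      rw [this]; exact MeasurableSet.univ_pi (fun t => hB t j))
  have hset : {ω | ∀ t j, ε ω t j ∈ B t j} =
      ⋂ j ∈ Finset.univ, (fun ω => fun t => ε ω t j) ⁻¹' {x : Fin T → ℝ | ∀ t, x t ∈ B t j} := by
    ext ω; simp [Set.mem_iInter]; exact forall_comm
  rw [hset, hcols]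
  refine Finset.prod_congr rfl fun j _ => ?_
  have hrow := (hrow_indep.comp (fun t (x : Fin p → ℝ) => x j)
      (fun t => measurable_pi_apply j)).measure_inter_preimage_eq_mul Finset.univ
    (sets := fun t => B t j) (fun t _ => hB t j)
  have hset2 : (fun ω => fun t => ε ω t j) ⁻¹' {x : Fin T → ℝ | ∀ t, x t ∈ B t j} =
      ⋂ t ∈ Finset.univ, ((fun (x : Fin p → ℝ) => x j) ∘ (fun ω => ε ω t)) ⁻¹' B t j := by
    ext ω; simp [Set.mem_iInter]
  rw [hset2, hrow]
  refine Finset.prod_congr rfl fun t _ => ?_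
  rfl

def mosaicF (T p : ℕ) (grp : Fin p → Fin 2)
    (H : (i : Fin 2) → Matrix {j : Fin p // grp j = i} {j : Fin p // grp j = i} ℝ)
    (m : Fin T → Fin p → ℝ) : Fin T → Fin p → ℝ :=
  fun t j => ∑ j' : {x : Fin p // grp x = grp j}, H (grp j) ⟨j, rfl⟩ j' * m t j'.1

def mosaicAct (T p : ℕ) (grp : Fin p → Fin 2) (σ : Fin 2 → Equiv.Perm (Fin T))
    (m : Fin T → Fin p → ℝ) : Fin T → Fin p → ℝ :=
  fun t j => m (σ (grp j) t) j

lemma mosaicF_measurable (T p : ℕ) (grp : Fin p → Fin 2)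
    (H : (i : Fin 2) → Matrix {j : Fin p // grp j = i} {j : Fin p // grp j = i} ℝ) :
    Measurable (mosaicF T p grp H) := by
  refine measurable_pi_lambda _ fun t => measurable_pi_lambda _ fun j => ?_
  refine Finset.measurable_sum _ fun j' _ => ?_
  have h1 : Measurable fun (c : Fin T → Fin p → ℝ) => c t j'.1 :=
    (measurable_pi_apply j'.1).comp (measurable_pi_apply t)
  exact h1.const_mul _

lemma mosaicAct_measurable (T p : ℕ) (grp : Fin p → Fin 2) (σ : Fin 2 → Equiv.Perm (Fin T)) :
    Measurable (mosaicAct T p grp σ) := by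
  refine measurable_pi_lambda _ fun t => measurable_pi_lambda _ fun j => ?_
  exact (measurable_pi_apply j).comp (measurable_pi_apply (σ (grp j) t))

lemma mosaicAct_act (T p : ℕ) (grp : Fin p → Fin 2) (σ τ : Fin 2 → Equiv.Perm (Fin T))
    (m : Fin T → Fin p → ℝ) :
    mosaicAct T p grp σ (mosaicAct T p grp τ m) = mosaicAct T p grp (fun i => τ i * σ i) m := by
  funext t j
  simp [mosaicAct, Equiv.Perm.mul_apply]

lemma mosaicAct_one (T p : ℕ) (grp : Fin p → Fin 2) (m : Fin T → Fin p → ℝ) :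
    mosaicAct T p grp (fun _ => 1) m = m := by
  funext t j
  simp [mosaicAct]

lemma mosaicF_act_comm (T p : ℕ) (grp : Fin p → Fin 2)
    (H : (i : Fin 2) → Matrix {j : Fin p // grp j = i} {j : Fin p // grp j = i} ℝ)
    (σ : Fin 2 → Equiv.Perm (Fin T)) (m : Fin T → Fin p → ℝ) :
    mosaicF T p grp H (mosaicAct T p grp σ m) = mosaicAct T p grp σ (mosaicF T p grp H m) := by
  funext t j
  simp only [mosaicF, mosaicAct]
  refine Finset.sum_congr rfl fun j' _ => ?_
  rw [j'.2]

def mosaicPhi (T R : ℕ) (j : Fin R) (g : Fin 2 × Fin R → Equiv.Perm (Fin T)) :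
    Fin 2 × Fin R → Equiv.Perm (Fin T) :=
  fun ir => (g (ir.1, j))⁻¹ * (if ir.2 = j then 1 else g ir)

lemma mosaicPhi_involutive (T R : ℕ) (j : Fin R) :
    Function.Involutive (mosaicPhi T R j) := by
  intro g
  funext ir
  obtain ⟨i, r⟩ := ir
  by_cases h : r = j
  · subst h
    simp [mosaicPhi]
  · simp [mosaicPhi, h, mul_inv_cancel_left]


/-- the skew shuffling map on the canonical space -/
def mosaicTmap (T p R : ℕ) (grp : Fin p → Fin 2) (j : Fin R)
    (w : (Fin 2 × Fin R → Equiv.Perm (Fin T)) × (Fin T → Fin p → ℝ)) :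
    (Fin 2 × Fin R → Equiv.Perm (Fin T)) × (Fin T → Fin p → ℝ) :=
  (mosaicPhi T R j w.1, mosaicAct T p grp (fun i => w.1 (i, j)) w.2)

lemma measurable_from_permPi {n R T : ℕ} {γ : Type*} [MeasurableSpace γ]
    (f : (Fin n × Fin R → Equiv.Perm (Fin T)) → γ) : Measurable f :=
  fun _ _ => permPi_measurableSet _

lemma mosaicTmap_measurable (T p R : ℕ) (grp : Fin p → Fin 2) (j : Fin R) :
    Measurable (mosaicTmap T p R grp j) := by
  have h1 : Measurable (fun w : (Fin 2 × Fin R → Equiv.Perm (Fin T)) × (Fin T → Fin p → ℝ) =>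
      mosaicPhi T R j w.1) := (measurable_from_permPi (mosaicPhi T R j)).comp measurable_fst
  refine Measurable.prodMk h1 ?_
  refine measurable_pi_lambda _ fun t => measurable_pi_lambda _ fun jc => ?_
  have heq : (fun w : (Fin 2 × Fin R → Equiv.Perm (Fin T)) × (Fin T → Fin p → ℝ) =>
      mosaicAct T p grp (fun i => w.1 (i, j)) w.2 t jc) =
      fun w => ∑ h : Equiv.Perm (Fin T),
        if w.1 (grp jc, j) = h then w.2 (h t) jc else 0 := by
    funext w
    rw [Finset.sum_ite_eq Finset.univ (w.1 (grp jc, j)) (fun h => w.2 (h t) jc)]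
    simp [mosaicAct]
  rw [heq]
  refine Finset.measurable_sum _ fun h _ => ?_
  have hset : MeasurableSet {w : (Fin 2 × Fin R → Equiv.Perm (Fin T)) × (Fin T → Fin p → ℝ) |
      w.1 (grp jc, j) = h} := by
    have h2 : Measurable (fun w : (Fin 2 × Fin R → Equiv.Perm (Fin T)) × (Fin T → Fin p → ℝ) =>
        w.1 (grp jc, j)) := (measurable_pi_apply (grp jc, j)).comp measurable_fst
    exact h2 (show MeasurableSet {h} from trivial)
  exact Measurable.ite hset
    ((measurable_pi_apply jc).comp ((measurable_pi_apply (h t)).comp measurable_snd))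
    measurable_const

/-- invariance of the canonical product measure under the shuffling map -/
lemma mosaic_P_invariance (T p R : ℕ) (grp : Fin p → Fin 2)
    (ν : Measure (Fin T → Fin p → ℝ)) [IsProbabilityMeasure ν]
    (hν : ∀ σ, ν.map (mosaicAct T p grp σ) = ν) (j : Fin R) :
    ((Measure.pi (fun _ : Fin 2 × Fin R => uniformPermMeasure (Fin T))).prod ν).map
        (mosaicTmap T p R grp j) =
      (Measure.pi (fun _ : Fin 2 × Fin R => uniformPermMeasure (Fin T))).prod ν := by
  set Ppi := Measure.pi (fun _ : Fin 2 × Fin R => uniformPermMeasure (Fin T)) with hPpi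
  refine (Measure.prod_eq fun A B hA hB => ?_).symm
  rw [Measure.map_apply (mosaicTmap_measurable T p R grp j) (hA.prod hB)]
  have hpre : mosaicTmap T p R grp j ⁻¹' (A ×ˢ B) =
      {w | mosaicPhi T R j w.1 ∈ A ∧ mosaicAct T p grp (fun i => w.1 (i, j)) w.2 ∈ B} := by
    ext w; simp [mosaicTmap, Set.mem_prod]
  have hpreMeas : MeasurableSet (mosaicTmap T p R grp j ⁻¹' (A ×ˢ B)) :=
    (mosaicTmap_measurable T p R grp j) (hA.prod hB)
  rw [Measure.prod_apply hpreMeas]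
  have hfib : ∀ g, ν (Prod.mk g ⁻¹' (mosaicTmap T p R grp j ⁻¹' (A ×ˢ B))) =
      (mosaicPhi T R j ⁻¹' A).indicator (fun _ => ν B) g := by
    intro g
    rw [hpre]
    by_cases hg : mosaicPhi T R j g ∈ A
    · have : (Prod.mk g ⁻¹'
          {w | mosaicPhi T R j w.1 ∈ A ∧ mosaicAct T p grp (fun i => w.1 (i, j)) w.2 ∈ B}) =
          mosaicAct T p grp (fun i => g (i, j)) ⁻¹' B := by
        ext m; simp [hg]
      rw [this, Set.indicator_of_mem (show g ∈ mosaicPhi T R j ⁻¹' A from hg) (fun _ => ν B)]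
      rw [← Measure.map_apply (mosaicAct_measurable T p grp _) hB, hν]
    · have : (Prod.mk g ⁻¹'
          {w | mosaicPhi T R j w.1 ∈ A ∧ mosaicAct T p grp (fun i => w.1 (i, j)) w.2 ∈ B}) =
          (∅ : Set _) := by
        ext m; simp [hg]
      rw [this, Set.indicator_of_notMem (show g ∉ mosaicPhi T R j ⁻¹' A from hg) (fun _ => ν B)]
      simp
  calc ∫⁻ g, ν (Prod.mk g ⁻¹' (mosaicTmap T p R grp j ⁻¹' (A ×ˢ B))) ∂Ppi
      = ∫⁻ g, (mosaicPhi T R j ⁻¹' A).indicator (fun _ => ν B) g ∂Ppi := by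
        exact lintegral_congr hfib
    _ = ν B * Ppi (mosaicPhi T R j ⁻¹' A) :=
        lintegral_indicator_const (permPi_measurableSet _) _
    _ = ν B * Ppi A := by rw [permPi_map_bij _ (mosaicPhi_involutive T R j).bijective]
    _ = Ppi A * ν B := mul_comm _ _

lemma mosaic_nu_invariance {Ω : Type*} [MeasurableSpace Ω] (μ : Measure Ω)
    [IsProbabilityMeasure μ] {T p : ℕ}
    (ε : Ω → Fin T → Fin p → ℝ) (hεmeas : Measurable ε)
    (hrow_indep : iIndepFun (fun t ω => ε ω t) μ)
    (hrow_ident : ∀ t t' : Fin T,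
      Measure.map (fun ω => ε ω t) μ = Measure.map (fun ω => ε ω t') μ)
    (hcol_indep : iIndepFun (fun j ω => fun t => ε ω t j) μ)
    (grp : Fin p → Fin 2) (σ : Fin 2 → Equiv.Perm (Fin T)) :
    (μ.map ε).map (mosaicAct T p grp σ) = μ.map ε := by
  haveI h1 : IsProbabilityMeasure (μ.map ε) := Measure.isProbabilityMeasure_map hεmeas.aemeasurable
  haveI h2 : IsProbabilityMeasure ((μ.map ε).map (mosaicAct T p grp σ)) :=
    Measure.isProbabilityMeasure_map (mosaicAct_measurable T p grp σ).aemeasurable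
  -- identical one-dimensional marginals
  have hq : ∀ (t t' : Fin T) (j : Fin p) (s : Set ℝ), MeasurableSet s →
      μ {ω | ε ω t j ∈ s} = μ {ω | ε ω t' j ∈ s} := by
    intro t t' j s hs
    have hmt : ∀ u : Fin T, Measurable (fun ω => ε ω u) :=
      fun u => (measurable_pi_apply u).comp hεmeas
    have hps : MeasurableSet ((fun x : Fin p → ℝ => x j) ⁻¹' s) := measurable_pi_apply j hs
    have e1 : {ω | ε ω t j ∈ s} = (fun ω => ε ω t) ⁻¹' ((fun x : Fin p → ℝ => x j) ⁻¹' s) := rfl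
    have e2 : {ω | ε ω t' j ∈ s} = (fun ω => ε ω t') ⁻¹' ((fun x : Fin p → ℝ => x j) ⁻¹' s) := rfl
    rw [e1, e2, ← Measure.map_apply (hmt t) hps, ← Measure.map_apply (hmt t') hps,
      hrow_ident t t']
  refine mosaic_measure_ext_boxes fun B hB => ?_
  have hboxMeas : MeasurableSet (Set.pi Set.univ fun t => Set.pi Set.univ (B t)) :=
    MeasurableSet.univ_pi fun t => MeasurableSet.univ_pi fun j => hB t j
  rw [Measure.map_apply (mosaicAct_measurable T p grp σ) hboxMeas,
    Measure.map_apply hεmeas ((mosaicAct_measurable T p grp σ) hboxMeas),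
    Measure.map_apply hεmeas hboxMeas]
  have hpre1 : ε ⁻¹' (mosaicAct T p grp σ ⁻¹' (Set.pi Set.univ fun t => Set.pi Set.univ (B t))) =
      {ω | ∀ t j, ε ω t j ∈ B ((σ (grp j))⁻¹ t) j} := by
    ext ω
    simp only [Set.mem_preimage, Set.mem_pi, Set.mem_univ, forall_true_left, Set.mem_setOf_eq,
      mosaicAct, true_implies]
    constructor
    · intro h t j
      have := h ((σ (grp j))⁻¹ t) j
      rwa [← Equiv.Perm.mul_apply, mul_inv_cancel, Equiv.Perm.one_apply] at this
    · intro h t j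
      have := h (σ (grp j) t) j
      rwa [← Equiv.Perm.mul_apply, inv_mul_cancel, Equiv.Perm.one_apply] at this
  have hpre2 : ε ⁻¹' (Set.pi Set.univ fun t => Set.pi Set.univ (B t)) =
      {ω | ∀ t j, ε ω t j ∈ B t j} := by
    ext ω
    simp [Set.mem_pi]
  rw [hpre1, hpre2,
    mosaic_box_prob μ ε hrow_indep hcol_indep (fun t j => B ((σ (grp j))⁻¹ t) j)
      (fun t j => hB _ j),
    mosaic_box_prob μ ε hrow_indep hcol_indep B hB]
  refine Finset.prod_congr rfl fun j _ => ?_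
  calc ∏ t : Fin T, μ {ω | ε ω t j ∈ B ((σ (grp j))⁻¹ t) j}
      = ∏ t : Fin T, μ {ω | ε ω ((σ (grp j))⁻¹ t) j ∈ B ((σ (grp j))⁻¹ t) j} :=
        Finset.prod_congr rfl fun t _ => hq t ((σ (grp j))⁻¹ t) j _ (hB _ j)
    _ = ∏ t : Fin T, μ {ω | ε ω t j ∈ B t j} :=
        Equiv.prod_comp ((σ (grp j))⁻¹ : Equiv.Perm (Fin T))
          (fun u => μ {ω | ε ω u j ∈ B u j})

/-- the vector of statistic values (original at index 0, permuted copies after) -/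
def mosaicVals (T p R : ℕ) (grp : Fin p → Fin 2)
    (H : (i : Fin 2) → Matrix {j : Fin p // grp j = i} {j : Fin p // grp j = i} ℝ)
    (S : (Fin T → Fin p → ℝ) → ℝ)
    (w : (Fin 2 × Fin R → Equiv.Perm (Fin T)) × (Fin T → Fin p → ℝ)) :
    Fin (R + 1) → ℝ :=
  Fin.cases (S (mosaicF T p grp H w.2))
    (fun r => S (mosaicAct T p grp (fun i => w.1 (i, r)) (mosaicF T p grp H w.2)))

lemma mosaicVals_zero (T p R : ℕ) (grp) (H) (S) (w) :
    mosaicVals T p R grp H S w 0 = S (mosaicF T p grp H w.2) := rfl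

lemma mosaicVals_succ (T p R : ℕ) (grp) (H) (S) (w) (r : Fin R) :
    mosaicVals T p R grp H S w r.succ =
      S (mosaicAct T p grp (fun i => w.1 (i, r)) (mosaicF T p grp H w.2)) := by
  simp [mosaicVals]

lemma mosaic_pair_act_measurable (T p R : ℕ) (grp : Fin p → Fin 2) (j : Fin R)
    (G : (Fin T → Fin p → ℝ) → (Fin T → Fin p → ℝ)) (hG : Measurable G) :
    Measurable (fun w : (Fin 2 × Fin R → Equiv.Perm (Fin T)) × (Fin T → Fin p → ℝ) =>
      mosaicAct T p grp (fun i => w.1 (i, j)) (G w.2)) := by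
  refine measurable_pi_lambda _ fun t => measurable_pi_lambda _ fun jc => ?_
  have heq : (fun w : (Fin 2 × Fin R → Equiv.Perm (Fin T)) × (Fin T → Fin p → ℝ) =>
      mosaicAct T p grp (fun i => w.1 (i, j)) (G w.2) t jc) =
      fun w => ∑ h : Equiv.Perm (Fin T),
        if w.1 (grp jc, j) = h then G w.2 (h t) jc else 0 := by
    funext w
    rw [Finset.sum_ite_eq Finset.univ (w.1 (grp jc, j)) (fun h => G w.2 (h t) jc)]
    simp [mosaicAct]
  rw [heq]
  refine Finset.measurable_sum _ fun h _ => ?_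
  have hset : MeasurableSet {w : (Fin 2 × Fin R → Equiv.Perm (Fin T)) × (Fin T → Fin p → ℝ) |
      w.1 (grp jc, j) = h} := by
    have h2 : Measurable (fun w : (Fin 2 × Fin R → Equiv.Perm (Fin T)) × (Fin T → Fin p → ℝ) =>
        w.1 (grp jc, j)) := (measurable_pi_apply (grp jc, j)).comp measurable_fst
    exact h2 (show MeasurableSet {h} from trivial)
  exact Measurable.ite hset
    ((measurable_pi_apply jc).comp ((measurable_pi_apply (h t)).comp (hG.comp measurable_snd)))
    measurable_const

lemma mosaicVals_measurable (T p R : ℕ) (grp) (H) (S : (Fin T → Fin p → ℝ) → ℝ)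
    (hS : Measurable S) (s : Fin (R + 1)) :
    Measurable (fun w : (Fin 2 × Fin R → Equiv.Perm (Fin T)) × (Fin T → Fin p → ℝ) =>
      mosaicVals T p R grp H S w s) := by
  induction s using Fin.cases with
  | zero =>
      simp only [mosaicVals_zero]
      exact hS.comp ((mosaicF_measurable T p grp H).comp measurable_snd)
  | succ r =>
      simp only [mosaicVals_succ]
      exact hS.comp (mosaic_pair_act_measurable T p R grp r _ (mosaicF_measurable T p grp H))

/-- the effect of the shuffling map on the value vector is a transposition -/
lemma mosaicVals_swap (T p R : ℕ) (grp) (H) (S : (Fin T → Fin p → ℝ) → ℝ) (jj : Fin R)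
    (w : (Fin 2 × Fin R → Equiv.Perm (Fin T)) × (Fin T → Fin p → ℝ)) (s : Fin (R + 1)) :
    mosaicVals T p R grp H S (mosaicTmap T p R grp jj w) s =
      mosaicVals T p R grp H S w (Equiv.swap 0 jj.succ s) := by
  induction s using Fin.cases with
  | zero =>
      rw [Equiv.swap_apply_left, mosaicVals_zero, mosaicVals_succ]
      show S (mosaicF T p grp H (mosaicAct T p grp (fun i => w.1 (i, jj)) w.2)) = _
      rw [mosaicF_act_comm]
  | succ r =>
      rw [mosaicVals_succ]
      show S (mosaicAct T p grp (fun i => mosaicPhi T R jj w.1 (i, r))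
        (mosaicF T p grp H (mosaicAct T p grp (fun i => w.1 (i, jj)) w.2))) = _
      rw [mosaicF_act_comm, mosaicAct_act]
      have hcomp : (fun i => w.1 (i, jj) * mosaicPhi T R jj w.1 (i, r)) =
          fun i => if r = jj then 1 else w.1 (i, r) := by
        funext i
        simp only [mosaicPhi]
        exact mul_inv_cancel_left _ _
      rw [hcomp]
      by_cases hr : r = jj
      · subst hr
        have h1 : (fun i : Fin 2 => if (r : Fin R) = r then (1 : Equiv.Perm (Fin T))
            else w.1 (i, r)) = fun _ => 1 := by
          funext i; rw [if_pos rfl]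
        rw [h1, mosaicAct_one, Equiv.swap_apply_right, mosaicVals_zero]
      · simp only [if_neg hr]
        rw [Equiv.swap_apply_of_ne_of_ne (Fin.succ_ne_zero r)
          (fun hcon => hr (Fin.succ_injective _ hcon)), mosaicVals_succ]

end
end MosaicAux

/-- **validity of the two-group mosaic permutation test.** Let
`Y t = L (X t) + ε t` where the `ε t` are i.i.d. random vectors in `ℝ^p` with jointly
independent coordinate time series (`H₀`), `X t ∈ ℝ^k` arbitrary, `L` deterministic.
Partition `[p] = G₁ ⊔ G₂` (via group labels `grp`), form the per-group OLS projections
`H i = I − L_{G_i}(L_{G_i}ᵀ L_{G_i})⁻¹ L_{G_i}ᵀ`, the estimated residuals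
`ε̂_{t,G_i} = H_i Y_{t,G_i}`, and for `r = 1, …, R` the group-wise row-permuted matrices
`ε̃⁽ʳ⁾` built from i.i.d. uniformly random permutations independent of the data. Then for
every measurable statistic `S`, `p_val = (1 + ∑ᵣ 1{S(ε̂) ≤ S(ε̃⁽ʳ⁾)})/(R+1)` satisfies
`P(p_val ≤ α) ≤ α` for every `α ∈ (0,1)`. -/
theorem two_group_mosaic_permutation_test_valid
    {Ω : Type*} [MeasurableSpace Ω] (μ : Measure Ω) [IsProbabilityMeasure μ]
    (T p k R : ℕ)
    (ε : Ω → Fin T → Fin p → ℝ) (hεmeas : Measurable ε)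
    -- the rows `ε t` are i.i.d.:
    (hrow_indep : iIndepFun (fun t ω => ε ω t) μ)
    (hrow_ident : ∀ t t' : Fin T, Measure.map (fun ω => ε ω t) μ = Measure.map (fun ω => ε ω t') μ)
    -- `H₀`: the columns `ε_{·,j}` are jointly independent:
    (hcol_indep : iIndepFun (fun j ω => fun t => ε ω t j) μ)
    -- arbitrary unobserved factor returns and deterministic exposures:
    (X : Ω → Fin T → Fin k → ℝ) (hXmeas : Measurable X)
    (L : Matrix (Fin p) (Fin k) ℝ)
    -- the observed returns `Y t = L (X t) + ε t`:
    (Y : Ω → Fin T → Fin p → ℝ)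
    (hY : ∀ ω t j, Y ω t j = (∑ a : Fin k, L j a * X ω t a) + ε ω t j)
    -- the deterministic partition `[p] = G₁ ⊔ G₂` encoded by group labels:
    (grp : Fin p → Fin 2)
    -- the submatrices `L_{G_i}`, with `L_{G_i}ᵀ L_{G_i}` invertible:
    (Lsub : (i : Fin 2) → Matrix {j : Fin p // grp j = i} (Fin k) ℝ)
    (hLsub : ∀ i (j : {j : Fin p // grp j = i}) a, Lsub i j a = L j.1 a)
    (hLinv : ∀ i, IsUnit ((Lsub i)ᵀ * Lsub i).det)
    -- the OLS projections `H i = I − L_{G_i}(L_{G_i}ᵀ L_{G_i})⁻¹ L_{G_i}ᵀ`: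
    (H : (i : Fin 2) → Matrix {j : Fin p // grp j = i} {j : Fin p // grp j = i} ℝ)
    (hH : ∀ i, H i = 1 - Lsub i * ((Lsub i)ᵀ * Lsub i)⁻¹ * (Lsub i)ᵀ)
    -- the estimated residuals `ε̂_{t,G_i} := H_i Y_{t,G_i}`:
    (εh : Ω → Fin T → Fin p → ℝ)
    (hεh : ∀ ω t (j : Fin p), εh ω t j =
      ∑ j' : {x : Fin p // grp x = grp j}, H (grp j) ⟨j, rfl⟩ j' * Y ω t j'.1)
    -- i.i.d. uniformly random permutations `π i r` of `[T]`, independent of all the data: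
    (π : Fin 2 → Fin R → Ω → Equiv.Perm (Fin T))
    (hπmeas : ∀ i r, Measurable (π i r))
    (hπ : Measure.map
        (fun ω => ((fun ir : Fin 2 × Fin R => π ir.1 ir.2 ω), (ε ω, X ω))) μ =
      (Measure.pi fun _ : Fin 2 × Fin R => uniformPermMeasure (Fin T)).prod
        (Measure.map (fun ω => (ε ω, X ω)) μ))
    -- the group-wise permuted residual matrices `ε̃⁽ʳ⁾`:
    (εt : Fin R → Ω → Fin T → Fin p → ℝ)
    (hεt : ∀ (r : Fin R) ω, εt r ω = fun t j => εh ω (π (grp j) r ω t) j)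
    -- an arbitrary measurable test statistic:
    (S : (Fin T → Fin p → ℝ) → ℝ) (hS : Measurable S) :
    ∀ α ∈ Set.Ioo (0 : ℝ) 1,
      μ {ω | (1 + ∑ r : Fin R, if S (εh ω) ≤ S (εt r ω) then (1 : ℝ) else 0) / (R + 1) ≤ α}
        ≤ ENNReal.ofReal α := by
  classical
  intro α hα
  obtain ⟨hα0, hα1⟩ := hα
  -- measures
  have hνprob : IsProbabilityMeasure (μ.map ε) := Measure.isProbabilityMeasure_map hεmeas.aemeasurable
  set ν : Measure (Fin T → Fin p → ℝ) := μ.map ε with hνdef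
  set Ppi : Measure (Fin 2 × Fin R → Equiv.Perm (Fin T)) :=
    Measure.pi fun _ : Fin 2 × Fin R => uniformPermMeasure (Fin T) with hPpidef
  haveI : IsProbabilityMeasure Ppi := by rw [hPpidef]; infer_instance
  set P : Measure ((Fin 2 × Fin R → Equiv.Perm (Fin T)) × (Fin T → Fin p → ℝ)) :=
    Ppi.prod ν with hPdef
  haveI : IsProbabilityMeasure P := by rw [hPdef]; infer_instance
  -- the residual map annihilates the factor part
  have hHL : ∀ i, H i * Lsub i = 0 := by
    intro i
    have hinv := Matrix.nonsing_inv_mul _ (hLinv i)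
    rw [hH i, Matrix.sub_mul, Matrix.one_mul]
    simp only [Matrix.mul_assoc]
    rw [hinv, Matrix.mul_one, sub_self]
  have hεhF : ∀ ω, εh ω = mosaicF T p grp H (ε ω) := by
    intro ω
    funext t j
    have hLz : ∀ a, (∑ j' : {x : Fin p // grp x = grp j},
        H (grp j) ⟨j, rfl⟩ j' * L j'.1 a) = 0 := by
      intro a
      have h0 : (H (grp j) * Lsub (grp j)) ⟨j, rfl⟩ a = 0 := by
        rw [hHL]; simp
      rw [Matrix.mul_apply] at h0
      rw [← h0]
      exact Finset.sum_congr rfl fun j' _ => by rw [hLsub]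
    calc εh ω t j
        = ∑ j' : {x : Fin p // grp x = grp j}, H (grp j) ⟨j, rfl⟩ j' *
            ((∑ a : Fin k, L j'.1 a * X ω t a) + ε ω t j'.1) := by
          rw [hεh]
          exact Finset.sum_congr rfl fun j' _ => by rw [hY]
      _ = (∑ j' : {x : Fin p // grp x = grp j}, H (grp j) ⟨j, rfl⟩ j' *
            ∑ a : Fin k, L j'.1 a * X ω t a) +
          ∑ j' : {x : Fin p // grp x = grp j}, H (grp j) ⟨j, rfl⟩ j' * ε ω t j'.1 := by
          simp_rw [mul_add]
          rw [Finset.sum_add_distrib]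
      _ = 0 + mosaicF T p grp H (ε ω) t j := by
          congr 1
          calc ∑ j' : {x : Fin p // grp x = grp j}, H (grp j) ⟨j, rfl⟩ j' *
                ∑ a : Fin k, L j'.1 a * X ω t a
              = ∑ j' : {x : Fin p // grp x = grp j}, ∑ a : Fin k,
                  H (grp j) ⟨j, rfl⟩ j' * L j'.1 a * X ω t a := by
                refine Finset.sum_congr rfl fun j' _ => ?_
                rw [Finset.mul_sum]
                exact Finset.sum_congr rfl fun a _ => (mul_assoc _ _ _).symm
            _ = ∑ a : Fin k, ∑ j' : {x : Fin p // grp x = grp j},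
                  H (grp j) ⟨j, rfl⟩ j' * L j'.1 a * X ω t a := Finset.sum_comm
            _ = ∑ a : Fin k, (∑ j' : {x : Fin p // grp x = grp j},
                  H (grp j) ⟨j, rfl⟩ j' * L j'.1 a) * X ω t a := by
                exact Finset.sum_congr rfl fun a _ => (Finset.sum_mul _ _ _).symm
            _ = 0 := by simp [hLz]
      _ = mosaicF T p grp H (ε ω) t j := zero_add _
  -- the joint law of permutations and noise
  set Pf : Ω → (Fin 2 × Fin R → Equiv.Perm (Fin T)) := fun ω ir => π ir.1 ir.2 ω with hPfdef
  have hPfmeas : Measurable Pf := measurable_pi_lambda _ fun ir => hπmeas ir.1 ir.2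
  set W : Ω → (Fin 2 × Fin R → Equiv.Perm (Fin T)) × (Fin T → Fin p → ℝ) :=
    fun ω => (Pf ω, ε ω) with hWdef
  have hWmeas : Measurable W := hPfmeas.prodMk hεmeas
  haveI : IsProbabilityMeasure (Measure.map (fun ω => (ε ω, X ω)) μ) :=
    Measure.isProbabilityMeasure_map (hεmeas.prodMk hXmeas).aemeasurable
  have hπε : μ.map W = P := by
    have hbig : Measurable (fun ω => ((fun ir : Fin 2 × Fin R => π ir.1 ir.2 ω), (ε ω, X ω))) :=
      Measurable.prodMk hPfmeas (hεmeas.prodMk hXmeas)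
    have hmapped := congrArg (Measure.map (Prod.map (id : _ → _)
      (Prod.fst : (Fin T → Fin p → ℝ) × (Fin T → Fin k → ℝ) → _))) hπ
    rw [Measure.map_map (measurable_id.prodMap measurable_fst) hbig,
      ← Measure.map_prod_map _ _ measurable_id measurable_fst,
      Measure.map_id,
      Measure.map_map measurable_fst (hεmeas.prodMk hXmeas)] at hmapped
    exact hmapped
  -- invariance of ν
  have hνinv : ∀ σ, ν.map (mosaicAct T p grp σ) = ν := fun σ =>
    mosaic_nu_invariance μ ε hεmeas hrow_indep hrow_ident hcol_indep grp σ
  -- counting machinery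
  set m₀ : ℕ := ⌊α * ((R : ℝ) + 1)⌋₊ with hm₀def
  set V := mosaicVals T p R grp H S with hVdef
  set cntR : ((Fin 2 × Fin R → Equiv.Perm (Fin T)) × (Fin T → Fin p → ℝ)) → Fin (R + 1) → ℝ :=
    fun w s0 => ∑ s : Fin (R + 1), if V w s0 ≤ V w s then (1 : ℝ) else 0 with hcntRdef
  have hbridge : ∀ w s0, cntR w s0 =
      ((Finset.univ.filter fun s => V w s0 ≤ V w s).card : ℝ) := by
    intro w s0
    rw [hcntRdef, Finset.card_filter, Nat.cast_sum]
    exact Finset.sum_congr rfl fun s _ => by split_ifs <;> simp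
  have hcntmeas : ∀ s0, Measurable fun w => cntR w s0 := by
    intro s0
    rw [hcntRdef]
    refine Finset.measurable_sum _ fun s _ => ?_
    exact Measurable.ite (measurableSet_le (mosaicVals_measurable T p R grp H S hS s0)
      (mosaicVals_measurable T p R grp H S hS s)) measurable_const measurable_const
  set A : Fin (R + 1) → Set ((Fin 2 × Fin R → Equiv.Perm (Fin T)) × (Fin T → Fin p → ℝ)) :=
    fun s0 => {w | cntR w s0 ≤ (m₀ : ℝ)} with hAdef
  have hAmeas : ∀ s0, MeasurableSet (A s0) := fun s0 =>
    measurableSet_le (hcntmeas s0) measurable_const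
  -- identification of the rejection event
  have hseteq : {ω | (1 + ∑ r : Fin R, if S (εh ω) ≤ S (εt r ω) then (1 : ℝ) else 0) /
      (R + 1) ≤ α} = W ⁻¹' (A 0) := by
    ext ω
    have hv0 : V (W ω) 0 = S (εh ω) := by
      rw [hVdef, mosaicVals_zero, hεhF ω]
    have hvr : ∀ r : Fin R, V (W ω) r.succ = S (εt r ω) := by
      intro r
      rw [hVdef, mosaicVals_succ, hεt r ω, hεhF ω]
      rfl
    have hnum : (1 + ∑ r : Fin R, if S (εh ω) ≤ S (εt r ω) then (1 : ℝ) else 0) =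
        cntR (W ω) 0 := by
      simp only [hcntRdef]
      rw [Fin.sum_univ_succ]
      congr 1
      · rw [hv0, if_pos le_rfl]
      · exact Finset.sum_congr rfl fun r _ => by rw [hv0, hvr r]
    simp only [Set.mem_setOf_eq, Set.mem_preimage, hAdef]
    rw [hnum, div_le_iff₀ (by positivity : (0 : ℝ) < (R : ℝ) + 1), hbridge]
    constructor
    · intro h
      exact Nat.cast_le.2 (Nat.le_floor h)
    · intro h
      exact le_trans h (Nat.floor_le (by positivity : (0 : ℝ) ≤ α * ((R : ℝ) + 1)))
  -- invariance of the probability of A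
  have hkey : ∀ jj : Fin R, P (A 0) = P (A jj.succ) := by
    intro jj
    have hinv := mosaic_P_invariance T p R grp ν hνinv jj
    have hcswap : ∀ w, cntR (mosaicTmap T p R grp jj w) 0 = cntR w jj.succ := by
      intro w
      simp only [hcntRdef, hVdef]
      calc (∑ s : Fin (R + 1),
            if mosaicVals T p R grp H S (mosaicTmap T p R grp jj w) 0 ≤
              mosaicVals T p R grp H S (mosaicTmap T p R grp jj w) s then (1 : ℝ) else 0)
          = ∑ s : Fin (R + 1), (if mosaicVals T p R grp H S w jj.succ ≤
              mosaicVals T p R grp H S w (Equiv.swap 0 jj.succ s) then (1 : ℝ) else 0) := by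
            refine Finset.sum_congr rfl fun s _ => ?_
            rw [mosaicVals_swap, mosaicVals_swap, Equiv.swap_apply_left]
        _ = ∑ s : Fin (R + 1), (if mosaicVals T p R grp H S w jj.succ ≤
              mosaicVals T p R grp H S w s then (1 : ℝ) else 0) :=
            Equiv.sum_comp (Equiv.swap (0 : Fin (R + 1)) jj.succ)
              (fun s => if mosaicVals T p R grp H S w jj.succ ≤
                mosaicVals T p R grp H S w s then (1 : ℝ) else 0)
    have hpre : mosaicTmap T p R grp jj ⁻¹' (A 0) = A jj.succ := by
      ext w
      simp only [Set.mem_preimage, hAdef, Set.mem_setOf_eq]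
      rw [hcswap w]
    calc P (A 0) = (P.map (mosaicTmap T p R grp jj)) (A 0) := by rw [hPdef, hinv]
      _ = P (mosaicTmap T p R grp jj ⁻¹' (A 0)) :=
          Measure.map_apply (mosaicTmap_measurable T p R grp jj) (hAmeas 0)
      _ = P (A jj.succ) := by rw [hpre]
  -- the counting bound
  have hsum : ∑ s0 : Fin (R + 1), P (A s0) ≤ (m₀ : ENNReal) := by
    have hind : ∀ s0, P (A s0) =
        ∫⁻ w, (A s0).indicator (fun _ => (1 : ENNReal)) w ∂P := by
      intro s0
      rw [lintegral_indicator_const (hAmeas s0), one_mul]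
    calc ∑ s0 : Fin (R + 1), P (A s0)
        = ∑ s0 : Fin (R + 1), ∫⁻ w, (A s0).indicator (fun _ => (1 : ENNReal)) w ∂P :=
          Finset.sum_congr rfl fun s0 _ => hind s0
      _ = ∫⁻ w, ∑ s0 : Fin (R + 1), (A s0).indicator (fun _ => (1 : ENNReal)) w ∂P :=
          (lintegral_finset_sum _ fun s0 _ =>
            measurable_const.indicator (hAmeas s0)).symm
      _ ≤ ∫⁻ _, (m₀ : ENNReal) ∂P := by
          refine lintegral_mono fun w => ?_
          calc ∑ s0 : Fin (R + 1), (A s0).indicator (fun _ => (1 : ENNReal)) w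
              = ∑ s0 : Fin (R + 1), if w ∈ A s0 then (1 : ENNReal) else 0 :=
                Finset.sum_congr rfl fun s0 _ => by rw [Set.indicator_apply]
            _ = ((Finset.univ.filter fun s0 => w ∈ A s0).card : ENNReal) := by
                rw [Finset.card_filter, Nat.cast_sum]
                exact Finset.sum_congr rfl fun s0 _ => by split_ifs <;> simp
            _ ≤ (m₀ : ENNReal) := by
                have hmem : ∀ s0, w ∈ A s0 ↔
                    ((Finset.univ.filter fun s => V w s0 ≤ V w s).card ≤ m₀) := by
                  intro s0
                  simp only [hAdef, Set.mem_setOf_eq]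
                  rw [hbridge]
                  exact Nat.cast_le
                have hfc : (Finset.univ.filter fun s0 => w ∈ A s0) =
                    (Finset.univ.filter fun s0 =>
                      ((Finset.univ.filter fun s => V w s0 ≤ V w s).card ≤ m₀)) :=
                  Finset.filter_congr fun s0 _ => hmem s0
                rw [hfc]
                exact_mod_cast mosaic_count_le (V w) m₀
      _ = (m₀ : ENNReal) := by
          rw [lintegral_const, measure_univ, mul_one]
  -- assemble
  rw [hseteq, ← Measure.map_apply hWmeas (hAmeas 0), hπε]
  have hRsum : ((R : ENNReal) + 1) * P (A 0) ≤ (m₀ : ENNReal) := by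
    have h1 : ∑ s0 : Fin (R + 1), P (A s0) = P (A 0) + ∑ jj : Fin R, P (A jj.succ) :=
      Fin.sum_univ_succ _
    have h2 : ∑ jj : Fin R, P (A jj.succ) = (R : ENNReal) * P (A 0) := by
      rw [Finset.sum_congr rfl fun jj _ => (hkey jj).symm]
      rw [Finset.sum_const, Finset.card_univ, Fintype.card_fin, nsmul_eq_mul]
    calc ((R : ENNReal) + 1) * P (A 0) = P (A 0) + (R : ENNReal) * P (A 0) := by ring
      _ = ∑ s0 : Fin (R + 1), P (A s0) := by rw [h1, h2]
      _ ≤ (m₀ : ENNReal) := hsum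
  have hne0 : ((R : ENNReal) + 1) ≠ 0 := by
    intro h
    have h1 : (1 : ENNReal) ≤ (R : ENNReal) + 1 := le_add_self
    rw [h] at h1
    simp at h1
  have hnetop : ((R : ENNReal) + 1) ≠ ⊤ := by
    exact ENNReal.add_ne_top.2 ⟨ENNReal.natCast_ne_top R, ENNReal.one_ne_top⟩
  have hm₀le : (m₀ : ENNReal) ≤ ((R : ENNReal) + 1) * ENNReal.ofReal α := by
    have h1 : (m₀ : ENNReal) = ENNReal.ofReal (m₀ : ℝ) := (ENNReal.ofReal_natCast m₀).symm
    have h2 : ((R : ENNReal) + 1) = ENNReal.ofReal ((R : ℝ) + 1) := by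
      rw [ENNReal.ofReal_add (by positivity) zero_le_one, ENNReal.ofReal_natCast,
        ENNReal.ofReal_one]
    rw [h1, h2, ← ENNReal.ofReal_mul (by positivity : (0 : ℝ) ≤ (R : ℝ) + 1)]
    refine ENNReal.ofReal_le_ofReal ?_
    rw [mul_comm]
    exact Nat.floor_le (by positivity)
  calc P (A 0) = ((R : ENNReal) + 1)⁻¹ * (((R : ENNReal) + 1) * P (A 0)) := by
        rw [← mul_assoc, ENNReal.inv_mul_cancel hne0 hnetop, one_mul]
    _ ≤ ((R : ENNReal) + 1)⁻¹ * (m₀ : ENNReal) := mul_le_mul_right hRsum _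
    _ ≤ ((R : ENNReal) + 1)⁻¹ * (((R : ENNReal) + 1) * ENNReal.ofReal α) :=
        mul_le_mul_right hm₀le _
    _ = ENNReal.ofReal α := by
        rw [← mul_assoc, ENNReal.inv_mul_cancel hne0 hnetop, one_mul]
end

section
/- Let {(B_m,G_m)}_{m=1}^M be a deterministic tiling of [T]×[p], and let ε ∈ R^{T×p} be a random matrix whose columns are jointly independent (H_0) and which is locally exchangeable with respect to the tiling. Then for all deterministic permutation matrices P_1 ∈ R^{|B_1|×|B_1|},…,P_M ∈ R^{|B_M|×|B_M|}, the tuple (P_1 ε_{(1)},…,P_M ε_{(M)}) has the same joint distribution as (ε_{(1)},…,ε_{(M)}). -/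
open MeasureTheory ProbabilityTheory

/-- Auxiliary: two jointly independent families with measurable components and equal marginal
laws have equal joint laws. -/
lemma joint_map_eq_of_iIndep {Ω : Type*} [MeasurableSpace Ω] (μ : Measure Ω)
    [IsProbabilityMeasure μ] {ι : Type*} [Fintype ι] {α : ι → Type*}
    [mα : ∀ i, MeasurableSpace (α i)] {X Y : ∀ i, Ω → α i}
    (hX : ∀ i, Measurable (X i)) (hY : ∀ i, Measurable (Y i))
    (hXi : iIndepFun X μ) (hYi : iIndepFun Y μ)
    (hmar : ∀ i, Measure.map (X i) μ = Measure.map (Y i) μ) :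
    Measure.map (fun ω i => X i ω) μ = Measure.map (fun ω i => Y i ω) μ := by
  have hXm : Measurable fun ω i => X i ω := measurable_pi_lambda _ hX
  have hYm : Measurable fun ω i => Y i ω := measurable_pi_lambda _ hY
  refine ext_of_generate_finite _ generateFrom_pi.symm isPiSystem_pi ?_ ?_
  · rintro _ ⟨E, hE, rfl⟩
    have hEm : ∀ i, MeasurableSet (E i) := fun i => hE i (Set.mem_univ i)
    rw [Measure.map_apply hXm (MeasurableSet.univ_pi hEm),
        Measure.map_apply hYm (MeasurableSet.univ_pi hEm)]
    have h1 : (fun ω i => X i ω) ⁻¹' Set.pi Set.univ E = ⋂ i ∈ Finset.univ, X i ⁻¹' E i := by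
      ext ω; simp [Set.mem_pi]
    have h2 : (fun ω i => Y i ω) ⁻¹' Set.pi Set.univ E = ⋂ i ∈ Finset.univ, Y i ⁻¹' E i := by
      ext ω; simp [Set.mem_pi]
    rw [h1, h2, hXi.measure_inter_preimage_eq_mul _ (fun i _ => hEm i),
        hYi.measure_inter_preimage_eq_mul _ (fun i _ => hEm i)]
    refine Finset.prod_congr rfl fun i _ => ?_
    rw [← Measure.map_apply (hX i) (hEm i), ← Measure.map_apply (hY i) (hEm i), hmar i]
  · rw [Measure.map_apply hXm MeasurableSet.univ, Measure.map_apply hYm MeasurableSet.univ,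
      Set.preimage_univ, Set.preimage_univ]

/-- For a deterministic tiling `{(B m, G m)}` of `[T] × [p]` and a random
matrix `ε` whose columns are jointly independent (`H₀`) and which is locally exchangeable with
respect to the tiling, applying arbitrary deterministic within-tile row permutations to the
tiles does not change the joint distribution of the tuple of tiles. -/
theorem within_tile_permutations_preserve_tile_law
    {Ω : Type*} [MeasurableSpace Ω] (μ : Measure Ω) [IsProbabilityMeasure μ]
    (T p M : ℕ) (ε : Ω → Fin T → Fin p → ℝ) (hmeas : Measurable ε)
    -- the tiling: every `(t, j)` lies in exactly one rectangle `B m × G m`,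
    -- namely the one indexed by `tile t j`:
    (B : Fin M → Finset (Fin T)) (G : Fin M → Finset (Fin p))
    (tile : Fin T → Fin p → Fin M)
    (hB : ∀ t j, t ∈ B (tile t j)) (hG : ∀ t j, j ∈ G (tile t j))
    (huniq : ∀ m t j, t ∈ B m → j ∈ G m → m = tile t j)
    -- `H₀`: the columns of `ε` are jointly independent:
    (hcol_indep : iIndepFun (fun j ω => fun t => ε ω t j) μ)
    -- local exchangeability of `ε` with respect to the tiling:
    (hlocexch : ∀ (j : Fin p) (π : Equiv.Perm (Fin T)), (∀ t, tile (π t) j = tile t j) →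
      Measure.map (fun ω => fun t => ε ω (π t) j) μ =
        Measure.map (fun ω => fun t => ε ω t j) μ) :
    -- conclusion: for all deterministic within-tile row permutations `σ m` of `B m`,
    -- the tuple of row-permuted tiles has the same law as the tuple of tiles
    ∀ σ : (m : Fin M) → Equiv.Perm {t : Fin T // t ∈ B m},
      Measure.map
        (fun ω => fun (m : Fin M) (t : {t : Fin T // t ∈ B m}) (j : {j : Fin p // j ∈ G m}) =>
          ε ω ((σ m t : {t : Fin T // t ∈ B m}) : Fin T) (j : Fin p)) μ =
      Measure.map
        (fun ω => fun (m : Fin M) (t : {t : Fin T // t ∈ B m}) (j : {j : Fin p // j ∈ G m}) =>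
          ε ω (t : Fin T) (j : Fin p)) μ := by
  intro σ
  -- transport `σ m` applications along equalities of tile indices
  have congrσ : ∀ {m m' : Fin M} (_ : m = m') (t : Fin T) (ht : t ∈ B m) (ht' : t ∈ B m'),
      ((σ m ⟨t, ht⟩ : {t : Fin T // t ∈ B m}) : Fin T)
        = ((σ m' ⟨t, ht'⟩ : {t : Fin T // t ∈ B m'}) : Fin T) := by
    rintro m m' rfl t ht ht'; rfl
  -- the per-column row permutation induced by the `σ m`
  set f : Fin p → Fin T → Fin T :=
    fun j t => ((σ (tile t j) ⟨t, hB t j⟩ : {s : Fin T // s ∈ B (tile t j)}) : Fin T) with hf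
  have htile : ∀ j t, tile (f j t) j = tile t j := fun j t =>
    (huniq (tile t j) _ j (σ (tile t j) ⟨t, hB t j⟩).2 (hG t j)).symm
  have hinj : ∀ j, Function.Injective (f j) := by
    intro j t1 t2 h
    have hm : tile t1 j = tile t2 j := by
      rw [← htile j t1, ← htile j t2, h]
    have ht2' : t2 ∈ B (tile t1 j) := by rw [hm]; exact hB t2 j
    have h' : ((σ (tile t1 j) ⟨t1, hB t1 j⟩ : {s : Fin T // s ∈ B (tile t1 j)}) : Fin T)
        = ((σ (tile t1 j) ⟨t2, ht2'⟩ : {s : Fin T // s ∈ B (tile t1 j)}) : Fin T) :=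
      h.trans (congrσ hm.symm t2 (hB t2 j) ht2')
    have := (σ (tile t1 j)).injective (Subtype.coe_injective h')
    exact congrArg Subtype.val this
  -- the column processes
  set X : Fin p → Ω → Fin T → ℝ := fun j ω => fun t => ε ω (f j t) j with hX
  set Y : Fin p → Ω → Fin T → ℝ := fun j ω => fun t => ε ω t j with hY
  have hXmeas : ∀ j, Measurable (X j) := fun j =>
    measurable_pi_lambda _ fun t =>
      (measurable_pi_apply j).comp ((measurable_pi_apply (f j t)).comp hmeas)
  have hYmeas : ∀ j, Measurable (Y j) := fun j =>
    measurable_pi_lambda _ fun t =>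
      (measurable_pi_apply j).comp ((measurable_pi_apply t).comp hmeas)
  have hXindep : iIndepFun X μ :=
    hcol_indep.comp (fun j x t => x (f j t))
      (fun j => measurable_pi_lambda _ fun t => measurable_pi_apply _)
  have hmar : ∀ j, Measure.map (X j) μ = Measure.map (Y j) μ := by
    intro j
    exact hlocexch j (Equiv.ofBijective (f j) (Finite.injective_iff_bijective.mp (hinj j)))
      (htile j)
  have hjoint : Measure.map (fun ω j => X j ω) μ = Measure.map (fun ω j => Y j ω) μ :=
    joint_map_eq_of_iIndep μ hXmeas hYmeas hXindep hcol_indep hmar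
  -- the tile-extraction map
  set Φ : (Fin p → Fin T → ℝ) →
      ((m : Fin M) → {t : Fin T // t ∈ B m} → {j : Fin p // j ∈ G m} → ℝ) :=
    fun x m t j => x (j : Fin p) (t : Fin T) with hΦ
  have hΦmeas : Measurable Φ :=
    measurable_pi_lambda _ fun m => measurable_pi_lambda _ fun t =>
      measurable_pi_lambda _ fun j =>
        (measurable_pi_apply _).comp (measurable_pi_apply _)
  have hL : (fun ω => fun (m : Fin M) (t : {t : Fin T // t ∈ B m})
        (j : {j : Fin p // j ∈ G m}) =>
          ε ω ((σ m t : {t : Fin T // t ∈ B m}) : Fin T) (j : Fin p))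
      = Φ ∘ (fun ω j => X j ω) := by
    funext ω m t j
    have hm : tile (t : Fin T) (j : Fin p) = m := (huniq m t j t.2 j.2).symm
    have hft : f (j : Fin p) (t : Fin T) = ((σ m t : {t : Fin T // t ∈ B m}) : Fin T) := by
      have := congrσ hm (t : Fin T) (hB (t : Fin T) (j : Fin p)) t.2
      simpa using this
    simp only [Function.comp_apply, hΦ, hX, hft]
  have hR : (fun ω => fun (m : Fin M) (t : {t : Fin T // t ∈ B m})
        (j : {j : Fin p // j ∈ G m}) =>
          ε ω (t : Fin T) (j : Fin p))
      = Φ ∘ (fun ω j => Y j ω) := rfl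
  rw [hL, hR, ← Measure.map_map hΦmeas (measurable_pi_lambda _ hXmeas),
    ← Measure.map_map hΦmeas (measurable_pi_lambda _ hYmeas), hjoint]
end

section
/- Let {(B_m,G_m)}_{m=1}^M be a deterministic tiling of [T]×[p], let ε ∈ R^{T×p} satisfy H_0 (jointly independent columns) and local exchangeability with respect to the tiling, and let H_m ∈ R^{|G_m|×|G_m|} be deterministic matrices. Define the mosaic residual matrix ε̂ ∈ R^{T×p} by ε̂_{B_m,G_m} := ε_{(m)} H_m, and for r = 1,…,R define ε̃^{(r)} ∈ R^{T×p} by ε̃^{(r)}_{B_m,G_m} := P_m^{(r)} ε_{(m)} H_m, where the P_m^{(r)} are i.i.d. uniformly random permutation matrices independent of ε. Then the tuple (ε̂, ε̃^{(1)},…,ε̃^{(R)}) is exchangeable. -/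
open MeasureTheory ProbabilityTheory
open scoped ENNReal

instance permMeasurableSingletonClass {α : Type*} :
    MeasurableSingletonClass (Equiv.Perm α) :=
  ⟨fun _ => MeasurableSpace.measurableSet_top⟩

instance uniformPermMeasure_isProbability {α : Type*} [Fintype α] [DecidableEq α] :
    IsProbabilityMeasure (uniformPermMeasure α) :=
  haveI : Nonempty (Equiv.Perm α) := ⟨1⟩
  PMF.toMeasure.isProbabilityMeasure _

lemma uniformPermMeasure_singleton_s10 {α : Type*} [Fintype α] [DecidableEq α]
    (g : Equiv.Perm α) :
    uniformPermMeasure α {g} = (Fintype.card (Equiv.Perm α) : ℝ≥0∞)⁻¹ := by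
  haveI : Nonempty (Equiv.Perm α) := ⟨1⟩
  rw [uniformPermMeasure, PMF.toMeasure_apply_singleton _ _ (measurableSet_singleton g),
    PMF.uniformOfFintype_apply]

/-- The joint law of finitely many jointly independent random variables is the product
of the marginals. -/
lemma indep_map_eq_pi {Ω : Type*} [MeasurableSpace Ω] (μ : Measure Ω)
    [IsProbabilityMeasure μ] {n : ℕ} {β : Fin n → Type*} [∀ i, MeasurableSpace (β i)]
    (f : ∀ i, Ω → β i) (hf : ∀ i, Measurable (f i))
    (h : iIndepFun f μ) :
    Measure.map (fun ω i => f i ω) μ = Measure.pi (fun i => Measure.map (f i) μ) := by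
  haveI : ∀ i, IsProbabilityMeasure (Measure.map (f i) μ) :=
    fun i => Measure.isProbabilityMeasure_map (hf i).aemeasurable
  refine (Measure.pi_eq (μ := fun i => Measure.map (f i) μ) fun s hs => ?_).symm
  rw [Measure.map_apply (measurable_pi_lambda _ hf) (MeasurableSet.univ_pi hs)]
  have hpre : (fun ω i => f i ω) ⁻¹' Set.pi Set.univ s
      = ⋂ i ∈ (Finset.univ : Finset (Fin n)), f i ⁻¹' s i := by
    ext ω; simp [Set.mem_pi]
  rw [hpre, h.measure_inter_preimage_eq_mul Finset.univ (fun i _ => hs i)]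
  exact Finset.prod_congr rfl fun i _ => (Measure.map_apply (hf i) (hs i)).symm

namespace MosaicAux

variable {T p M R : ℕ} {B : Fin M → Finset (Fin T)} {G : Fin M → Finset (Fin p)}
  {tile : Fin T → Fin p → Fin M}

/-- The within-tile row-permutation action on matrices. -/
def act (hB : ∀ t j, t ∈ B (tile t j)) (γ : ∀ m, Equiv.Perm {t : Fin T // t ∈ B m})
    (x : Fin T → Fin p → ℝ) : Fin T → Fin p → ℝ :=
  fun t j => x ((γ (tile t j)) ⟨t, hB t j⟩).1 j

lemma coe_cast (γ : ∀ m, Equiv.Perm {t : Fin T // t ∈ B m}) {m m' : Fin M} (h : m = m')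
    {t : Fin T} (ht : t ∈ B m) (ht' : t ∈ B m') :
    ((γ m) ⟨t, ht⟩).1 = ((γ m') ⟨t, ht'⟩).1 := by
  subst h; rfl

lemma act_one (hB : ∀ t j, t ∈ B (tile t j)) (x : Fin T → Fin p → ℝ) :
    act hB 1 x = x := rfl

lemma act_act (hB : ∀ t j, t ∈ B (tile t j)) (hG : ∀ t j, j ∈ G (tile t j))
    (huniq : ∀ m t j, t ∈ B m → j ∈ G m → m = tile t j)
    (γ δ : ∀ m, Equiv.Perm {t : Fin T // t ∈ B m}) (x : Fin T → Fin p → ℝ) :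
    act hB γ (act hB δ x) = act hB (δ * γ) x := by
  funext t j
  have h1 : tile (((γ (tile t j)) ⟨t, hB t j⟩).1) j = tile t j :=
    (huniq _ _ _ ((γ (tile t j)) ⟨t, hB t j⟩).2 (hG t j)).symm
  show x ((δ (tile (((γ (tile t j)) ⟨t, hB t j⟩).1) j))
      ⟨((γ (tile t j)) ⟨t, hB t j⟩).1, hB _ j⟩).1 j
    = x (((δ * γ) (tile t j)) ⟨t, hB t j⟩).1 j
  rw [coe_cast δ h1 (hB _ j) ((γ (tile t j)) ⟨t, hB t j⟩).2]
  rfl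

lemma act_measurable (hB : ∀ t j, t ∈ B (tile t j))
    (γ : ∀ m, Equiv.Perm {t : Fin T // t ∈ B m}) : Measurable (act hB γ) :=
  measurable_pi_lambda _ fun t => measurable_pi_lambda _ fun j =>
    (measurable_pi_apply j).comp (measurable_pi_apply _)

/-- The mosaic residual transform. -/
def F (hG : ∀ t j, j ∈ G (tile t j))
    (H : (m : Fin M) → Matrix {j : Fin p // j ∈ G m} {j : Fin p // j ∈ G m} ℝ)
    (x : Fin T → Fin p → ℝ) : Fin T → Fin p → ℝ :=
  fun t j => ∑ j' : {x' : Fin p // x' ∈ G (tile t j)}, x t j'.1 * H (tile t j) j' ⟨j, hG t j⟩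

lemma F_cast (H : (m : Fin M) → Matrix {j : Fin p // j ∈ G m} {j : Fin p // j ∈ G m} ℝ)
    {m m' : Fin M} (h : m = m') (row : Fin p → ℝ) (j : Fin p)
    (hj : j ∈ G m) (hj' : j ∈ G m') :
    (∑ j' : {x' : Fin p // x' ∈ G m}, row j'.1 * H m j' ⟨j, hj⟩) =
      ∑ j' : {x' : Fin p // x' ∈ G m'}, row j'.1 * H m' j' ⟨j, hj'⟩ := by
  subst h; rfl

lemma F_measurable (hG : ∀ t j, j ∈ G (tile t j))
    (H : (m : Fin M) → Matrix {j : Fin p // j ∈ G m} {j : Fin p // j ∈ G m} ℝ) :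
    Measurable (F hG H) :=
  measurable_pi_lambda _ fun t => measurable_pi_lambda _ fun j =>
    Finset.measurable_sum _ fun j' _ =>
      ((measurable_pi_apply j'.1).comp (measurable_pi_apply t)).mul_const _

/-- The family of within-tile permutations attached to coordinate `r` of the tuple
(the identity for `r = 0`). -/
def Gam (g : (mr : Fin M × Fin R) → Equiv.Perm {t : Fin T // t ∈ B mr.1})
    (r : Fin (R + 1)) : ∀ m, Equiv.Perm {t : Fin T // t ∈ B m} :=
  Fin.cases 1 (fun r' m => g (m, r')) r

lemma Gam_zero (g : (mr : Fin M × Fin R) → Equiv.Perm {t : Fin T // t ∈ B mr.1}) :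
    Gam g 0 = 1 := by simp [Gam]

lemma Gam_succ (g : (mr : Fin M × Fin R) → Equiv.Perm {t : Fin T // t ∈ B mr.1})
    (r : Fin R) : Gam g r.succ = fun m => g (m, r) := by simp [Gam]

/-- The reshuffling bijection on the permutation families induced by a permutation of the
tuple coordinates. -/
def Phi (τ : Equiv.Perm (Fin (R + 1)))
    (g : (mr : Fin M × Fin R) → Equiv.Perm {t : Fin T // t ∈ B mr.1}) :
    (mr : Fin M × Fin R) → Equiv.Perm {t : Fin T // t ∈ B mr.1} :=
  fun mr => ((Gam g (τ 0))⁻¹ * Gam g (τ mr.2.succ)) mr.1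

lemma Gam_Phi (τ : Equiv.Perm (Fin (R + 1)))
    (g : (mr : Fin M × Fin R) → Equiv.Perm {t : Fin T // t ∈ B mr.1}) (r : Fin (R + 1)) :
    Gam (Phi τ g) r = (Gam g (τ 0))⁻¹ * Gam g (τ r) := by
  induction r using Fin.cases with
  | zero =>
      rw [Gam_zero]
      exact (inv_mul_cancel _).symm
  | succ r' =>
      rw [Gam_succ]
      funext m
      rfl

lemma Phi_inv (τ : Equiv.Perm (Fin (R + 1)))
    (g : (mr : Fin M × Fin R) → Equiv.Perm {t : Fin T // t ∈ B mr.1}) :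
    Phi τ⁻¹ (Phi τ g) = g := by
  funext mr
  show ((Gam (Phi τ g) (τ⁻¹ 0))⁻¹ * Gam (Phi τ g) (τ⁻¹ mr.2.succ)) mr.1 = g mr
  rw [Gam_Phi, Gam_Phi, Equiv.Perm.inv_def τ, Equiv.apply_symm_apply, Equiv.apply_symm_apply, Gam_zero,
    mul_one, inv_inv, mul_inv_cancel_left, Gam_succ]

/-- The map taking the pair (permutation family, matrix) to the `σ`-permuted tuple of
mosaic residuals. -/
def Psi (hB : ∀ t j, t ∈ B (tile t j)) (hG : ∀ t j, j ∈ G (tile t j))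
    (H : (m : Fin M) → Matrix {j : Fin p // j ∈ G m} {j : Fin p // j ∈ G m} ℝ)
    (σ : Equiv.Perm (Fin (R + 1)))
    (q : ((mr : Fin M × Fin R) → Equiv.Perm {t : Fin T // t ∈ B mr.1})
      × (Fin T → Fin p → ℝ)) :
    Fin (R + 1) → Fin T → Fin p → ℝ :=
  fun r => F hG H (act hB (Gam q.1 (σ r)) q.2)

lemma Psi_section_measurable (hB : ∀ t j, t ∈ B (tile t j)) (hG : ∀ t j, j ∈ G (tile t j))
    (H : (m : Fin M) → Matrix {j : Fin p // j ∈ G m} {j : Fin p // j ∈ G m} ℝ)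
    (σ : Equiv.Perm (Fin (R + 1)))
    (g : (mr : Fin M × Fin R) → Equiv.Perm {t : Fin T // t ∈ B mr.1}) :
    Measurable (fun x => Psi hB hG H σ (g, x)) := by
  have hrfl : (fun x => Psi hB hG H σ (g, x))
      = fun x r => F hG H (act hB (Gam g (σ r)) x) := rfl
  rw [hrfl]
  exact measurable_pi_lambda _ fun r => (F_measurable hG H).comp (act_measurable hB _)

lemma Psi_measurable (hB : ∀ t j, t ∈ B (tile t j)) (hG : ∀ t j, j ∈ G (tile t j))
    (H : (m : Fin M) → Matrix {j : Fin p // j ∈ G m} {j : Fin p // j ∈ G m} ℝ)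
    (σ : Equiv.Perm (Fin (R + 1))) :
    Measurable (Psi hB hG H σ) := by
  have h : Measurable (fun q : (Fin T → Fin p → ℝ)
      × ((mr : Fin M × Fin R) → Equiv.Perm {t : Fin T // t ∈ B mr.1}) =>
      Psi hB hG H σ (q.2, q.1)) :=
    measurable_from_prod_countable_left fun g => Psi_section_measurable hB hG H σ g
  exact h.comp measurable_swap

end MosaicAux

/-- For a deterministic tiling `{(B m, G m)}` of `[T] × [p]`, a random
matrix `ε` satisfying `H₀` (jointly independent columns) and local exchangeability with
respect to the tiling, and deterministic matrices `H m`, the mosaic residual matrix `ε̂`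
(with `ε̂_{B_m,G_m} = ε_(m) H_m`) together with its `R` within-tile-permuted variants
`ε̃⁽¹⁾, …, ε̃⁽ᴿ⁾` (using i.i.d. uniformly random within-tile row permutations independent
of `ε`) form an exchangeable tuple. -/
theorem mosaic_residual_tuple_exchangeable
    {Ω : Type*} [MeasurableSpace Ω] (μ : Measure Ω) [IsProbabilityMeasure μ]
    (T p M R : ℕ) (ε : Ω → Fin T → Fin p → ℝ) (hmeas : Measurable ε)
    -- the tiling: every `(t, j)` lies in exactly one rectangle `B m × G m`,
    -- namely the one indexed by `tile t j`:
    (B : Fin M → Finset (Fin T)) (G : Fin M → Finset (Fin p))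
    (tile : Fin T → Fin p → Fin M)
    (hB : ∀ t j, t ∈ B (tile t j)) (hG : ∀ t j, j ∈ G (tile t j))
    (huniq : ∀ m t j, t ∈ B m → j ∈ G m → m = tile t j)
    -- `H₀`: the columns of `ε` are jointly independent:
    (hcol_indep : iIndepFun (fun j ω => fun t => ε ω t j) μ)
    -- local exchangeability of `ε` with respect to the tiling:
    (hlocexch : ∀ (j : Fin p) (π : Equiv.Perm (Fin T)), (∀ t, tile (π t) j = tile t j) →
      Measure.map (fun ω => fun t => ε ω (π t) j) μ =
        Measure.map (fun ω => fun t => ε ω t j) μ)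
    -- deterministic matrices `H m ∈ ℝ^{|G m| × |G m|}` and mosaic residuals
    -- `ε̂_{B_m, G_m} := ε_(m) H_m`:
    (H : (m : Fin M) → Matrix {j : Fin p // j ∈ G m} {j : Fin p // j ∈ G m} ℝ)
    (εh : Ω → Fin T → Fin p → ℝ)
    (hεh : ∀ ω t j, εh ω t j =
      ∑ j' : {x : Fin p // x ∈ G (tile t j)}, ε ω t j'.1 * H (tile t j) j' ⟨j, hG t j⟩)
    -- the i.i.d. uniformly random within-tile row permutations, independent of `ε`:
    (π : (m : Fin M) → Fin R → Ω → Equiv.Perm {t : Fin T // t ∈ B m})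
    (hπmeas : ∀ m r, Measurable (π m r))
    (hπ : Measure.map (fun ω => ((fun mr : Fin M × Fin R => π mr.1 mr.2 ω), ε ω)) μ =
      (Measure.pi fun mr : Fin M × Fin R =>
        uniformPermMeasure {t : Fin T // t ∈ B mr.1}).prod (Measure.map ε μ))
    -- the tuple `(ε̂, ε̃⁽¹⁾, …, ε̃⁽ᴿ⁾)`:
    (W : Fin (R + 1) → Ω → Fin T → Fin p → ℝ)
    (hW0 : ∀ ω, W 0 ω = εh ω)
    (hWr : ∀ (r : Fin R) ω, W r.succ ω =
      fun t j => εh ω (π (tile t j) r ω ⟨t, hB t j⟩).1 j) :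
    ∀ τ : Equiv.Perm (Fin (R + 1)),
      Measure.map (fun ω => fun r => W (τ r) ω) μ =
        Measure.map (fun ω => fun r => W r ω) μ := by
  intro τ
  classical
  -- column measurability
  have hcolm : ∀ j : Fin p, Measurable (fun ω => fun t => ε ω t j) := fun j =>
    measurable_pi_lambda _ fun t =>
      (measurable_pi_apply j).comp ((measurable_pi_apply t).comp hmeas)
  haveI hν : IsProbabilityMeasure (Measure.map ε μ) :=
    Measure.isProbabilityMeasure_map hmeas.aemeasurable
  -- Lemma A: the law of `ε` is invariant under deterministic within-tile row permutations
  have lemA : ∀ γ : ∀ m, Equiv.Perm {t : Fin T // t ∈ B m},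
      Measure.map (MosaicAux.act hB γ) (Measure.map ε μ) = Measure.map ε μ := by
    intro γ
    have htile_act : ∀ (t : Fin T) (j : Fin p),
        tile (((γ (tile t j)) ⟨t, hB t j⟩).1) j = tile t j := fun t j =>
      (huniq _ _ _ ((γ (tile t j)) ⟨t, hB t j⟩).2 (hG t j)).symm
    have hinj : ∀ j : Fin p,
        Function.Injective (fun t => ((γ (tile t j)) ⟨t, hB t j⟩).1) := by
      intro j t1 t2 h12
      change ((γ (tile t1 j)) ⟨t1, hB t1 j⟩).1 = ((γ (tile t2 j)) ⟨t2, hB t2 j⟩).1 at h12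
      have e : tile t1 j = tile t2 j := by
        rw [← htile_act t1 j, ← htile_act t2 j, h12]
      have ht' : t2 ∈ B (tile t1 j) := by rw [e]; exact hB t2 j
      rw [MosaicAux.coe_cast γ e.symm (hB t2 j) ht'] at h12
      have h2 := (γ (tile t1 j)).injective (Subtype.ext h12)
      exact congrArg Subtype.val h2
    have hbij : ∀ j : Fin p,
        Function.Bijective (fun t => ((γ (tile t j)) ⟨t, hB t j⟩).1) :=
      fun j => Finite.injective_iff_bijective.mp (hinj j)
    have hmarg : ∀ j, Measure.map (fun ω => fun t => ε ω ((γ (tile t j)) ⟨t, hB t j⟩).1 j) μ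
        = Measure.map (fun ω => fun t => ε ω t j) μ := by
      intro j
      exact hlocexch j (Equiv.ofBijective _ (hbij j)) (fun t => htile_act t j)
    have hpcm : ∀ j, Measurable (fun ω => fun t => ε ω ((γ (tile t j)) ⟨t, hB t j⟩).1 j) :=
      fun j => measurable_pi_lambda _ fun t =>
        (measurable_pi_apply j).comp ((measurable_pi_apply _).comp hmeas)
    have hindep' : iIndepFun
        (fun j ω => fun t => ε ω ((γ (tile t j)) ⟨t, hB t j⟩).1 j) μ :=
      hcol_indep.comp (fun j (y : Fin T → ℝ) => fun t => y ((γ (tile t j)) ⟨t, hB t j⟩).1)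
        (fun j => measurable_pi_lambda _ fun t => measurable_pi_apply _)
    have h1 := indep_map_eq_pi μ _ hpcm hindep'
    have h2 := indep_map_eq_pi μ _ hcolm hcol_indep
    have hswap : Measure.map (fun ω => fun j => fun t => ε ω ((γ (tile t j)) ⟨t, hB t j⟩).1 j) μ
        = Measure.map (fun ω => fun j => fun t => ε ω t j) μ :=
      h1.trans ((congrArg Measure.pi (funext hmarg)).trans h2.symm)
    have hsb : Measurable (fun y : Fin p → Fin T → ℝ => fun t => fun j => y j t) :=
      measurable_pi_lambda _ fun t => measurable_pi_lambda _ fun j =>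
        (measurable_pi_apply t).comp (measurable_pi_apply j)
    have hL : Measure.map (fun ω => MosaicAux.act hB γ (ε ω)) μ = Measure.map ε μ := by
      have e1 : (fun ω => MosaicAux.act hB γ (ε ω))
          = (fun y : Fin p → Fin T → ℝ => fun t => fun j => y j t)
            ∘ (fun ω => fun j => fun t => ε ω ((γ (tile t j)) ⟨t, hB t j⟩).1 j) := rfl
      have e2 : ε = (fun y : Fin p → Fin T → ℝ => fun t => fun j => y j t)
            ∘ (fun ω => fun j => fun t => ε ω t j) := rfl
      rw [e1, ← Measure.map_map hsb (measurable_pi_lambda _ hpcm), hswap,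
        Measure.map_map hsb (measurable_pi_lambda _ hcolm), ← e2]
    rw [Measure.map_map (MosaicAux.act_measurable hB γ) hmeas]
    exact hL
  -- the joint map
  have hJm : Measurable (fun ω => ((fun mr : Fin M × Fin R => π mr.1 mr.2 ω), ε ω)) :=
    (measurable_pi_lambda _ fun mr => hπmeas mr.1 mr.2).prodMk hmeas
  -- representation of the permuted tuples
  have htuple : ∀ σ : Equiv.Perm (Fin (R + 1)),
      (fun ω => fun r => W (σ r) ω)
        = (MosaicAux.Psi hB hG H σ)
            ∘ (fun ω => ((fun mr : Fin M × Fin R => π mr.1 mr.2 ω), ε ω)) := by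
    intro σ
    funext ω r
    show W (σ r) ω = MosaicAux.F hG H
      (MosaicAux.act hB (MosaicAux.Gam (fun mr : Fin M × Fin R => π mr.1 mr.2 ω) (σ r)) (ε ω))
    generalize σ r = s
    induction s using Fin.cases with
    | zero =>
        rw [hW0, MosaicAux.Gam_zero, MosaicAux.act_one]
        funext t j
        rw [hεh]
        rfl
    | succ r' =>
        rw [hWr r' ω, MosaicAux.Gam_succ]
        funext t j
        show εh ω ((π (tile t j) r' ω ⟨t, hB t j⟩).1) j
          = MosaicAux.F hG H (MosaicAux.act hB (fun m => π m r' ω) (ε ω)) t j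
        have e : tile ((π (tile t j) r' ω ⟨t, hB t j⟩).1) j = tile t j :=
          (huniq _ _ _ (π (tile t j) r' ω ⟨t, hB t j⟩).2 (hG t j)).symm
        rw [hεh, MosaicAux.F_cast H e (ε ω ((π (tile t j) r' ω ⟨t, hB t j⟩).1)) j
          (hG _ j) (hG t j)]
        simp only [MosaicAux.F, MosaicAux.act]
        refine Finset.sum_congr rfl fun j' _ => ?_
        have ej' : tile t j'.1 = tile t j := (huniq _ _ _ (hB t j) j'.2).symm
        rw [MosaicAux.coe_cast (fun m => π m r' ω) ej' (hB t j'.1) (hB t j)]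
  set Pm : Measure ((mr : Fin M × Fin R) → Equiv.Perm {t : Fin T // t ∈ B mr.1}) :=
    Measure.pi fun mr : Fin M × Fin R => uniformPermMeasure {t : Fin T // t ∈ B mr.1}
    with hPm_def
  -- the core exchangeability computation
  have hcore : Measure.map (MosaicAux.Psi hB hG H τ) (Pm.prod (Measure.map ε μ))
      = Measure.map (MosaicAux.Psi hB hG H 1) (Pm.prod (Measure.map ε μ)) := by
    refine Measure.ext fun A hA => ?_
    rw [Measure.map_apply (MosaicAux.Psi_measurable hB hG H τ) hA,
      Measure.map_apply (MosaicAux.Psi_measurable hB hG H 1) hA,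
      Measure.prod_apply ((MosaicAux.Psi_measurable hB hG H τ) hA),
      Measure.prod_apply ((MosaicAux.Psi_measurable hB hG H 1) hA),
      lintegral_countable', lintegral_countable']
    have hPmsing : ∀ g : (mr : Fin M × Fin R) → Equiv.Perm {t : Fin T // t ∈ B mr.1},
        Pm {g} = ∏ mr : Fin M × Fin R,
          (Fintype.card (Equiv.Perm {t : Fin T // t ∈ B mr.1}) : ℝ≥0∞)⁻¹ := by
      intro g
      rw [hPm_def, ← Set.univ_pi_singleton g, Measure.pi_pi]
      exact Finset.prod_congr rfl fun mr _ => uniformPermMeasure_singleton_s10 _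
    have hkey : ∀ g : (mr : Fin M × Fin R) → Equiv.Perm {t : Fin T // t ∈ B mr.1},
        (Measure.map ε μ) (Prod.mk g ⁻¹' (MosaicAux.Psi hB hG H τ ⁻¹' A))
        = (Measure.map ε μ)
            (Prod.mk (MosaicAux.Phi τ g) ⁻¹' (MosaicAux.Psi hB hG H 1 ⁻¹' A)) := by
      intro g
      have hfun : (fun x => MosaicAux.Psi hB hG H τ (g, x))
          = (fun x => MosaicAux.Psi hB hG H 1 (MosaicAux.Phi τ g, x))
            ∘ (MosaicAux.act hB (MosaicAux.Gam g (τ 0))) := by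
        funext x
        funext r
        show MosaicAux.F hG H (MosaicAux.act hB (MosaicAux.Gam g (τ r)) x)
          = MosaicAux.F hG H (MosaicAux.act hB
              (MosaicAux.Gam (MosaicAux.Phi τ g) ((1 : Equiv.Perm (Fin (R + 1))) r))
              (MosaicAux.act hB (MosaicAux.Gam g (τ 0)) x))
        simp only [Equiv.Perm.one_apply]
        rw [MosaicAux.act_act hB hG huniq, MosaicAux.Gam_Phi, mul_inv_cancel_left]
      have h1 : Prod.mk g ⁻¹' (MosaicAux.Psi hB hG H τ ⁻¹' A)
          = (fun x => MosaicAux.Psi hB hG H τ (g, x)) ⁻¹' A := rfl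
      have h2 : Prod.mk (MosaicAux.Phi τ g) ⁻¹' (MosaicAux.Psi hB hG H 1 ⁻¹' A)
          = (fun x => MosaicAux.Psi hB hG H 1 (MosaicAux.Phi τ g, x)) ⁻¹' A := rfl
      rw [h1, h2, hfun, Set.preimage_comp,
        ← Measure.map_apply (MosaicAux.act_measurable hB _)
          ((MosaicAux.Psi_section_measurable hB hG H 1 _) hA),
        lemA]
    calc (∑' g, (Measure.map ε μ) (Prod.mk g ⁻¹' (MosaicAux.Psi hB hG H τ ⁻¹' A)) * Pm {g})
        = ∑' g, (Measure.map ε μ)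
              (Prod.mk (MosaicAux.Phi τ g) ⁻¹' (MosaicAux.Psi hB hG H 1 ⁻¹' A))
            * Pm {MosaicAux.Phi τ g} := by
          refine tsum_congr fun g => ?_
          rw [hkey g, hPmsing g, hPmsing (MosaicAux.Phi τ g)]
      _ = ∑' g, (Measure.map ε μ) (Prod.mk g ⁻¹' (MosaicAux.Psi hB hG H 1 ⁻¹' A)) * Pm {g} := by
          have h := Equiv.tsum_eq
            ((⟨MosaicAux.Phi τ, MosaicAux.Phi τ⁻¹, MosaicAux.Phi_inv τ,
              fun g => by simpa using MosaicAux.Phi_inv τ⁻¹ g⟩ :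
              ((mr : Fin M × Fin R) → Equiv.Perm {t : Fin T // t ∈ B mr.1})
                ≃ ((mr : Fin M × Fin R) → Equiv.Perm {t : Fin T // t ∈ B mr.1})))
            (fun g => (Measure.map ε μ)
              (Prod.mk g ⁻¹' (MosaicAux.Psi hB hG H 1 ⁻¹' A)) * Pm {g})
          simpa only [Equiv.coe_fn_mk] using h
  -- putting everything together
  calc Measure.map (fun ω => fun r => W (τ r) ω) μ
      = Measure.map ((MosaicAux.Psi hB hG H τ)
          ∘ (fun ω => ((fun mr : Fin M × Fin R => π mr.1 mr.2 ω), ε ω))) μ := by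
        rw [htuple τ]
    _ = Measure.map (MosaicAux.Psi hB hG H τ)
          (Measure.map (fun ω => ((fun mr : Fin M × Fin R => π mr.1 mr.2 ω), ε ω)) μ) :=
        (Measure.map_map (MosaicAux.Psi_measurable hB hG H τ) hJm).symm
    _ = Measure.map (MosaicAux.Psi hB hG H τ) (Pm.prod (Measure.map ε μ)) := by rw [hπ]
    _ = Measure.map (MosaicAux.Psi hB hG H 1) (Pm.prod (Measure.map ε μ)) := hcore
    _ = Measure.map (MosaicAux.Psi hB hG H 1)
          (Measure.map (fun ω => ((fun mr : Fin M × Fin R => π mr.1 mr.2 ω), ε ω)) μ) := by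
        rw [hπ]
    _ = Measure.map ((MosaicAux.Psi hB hG H 1)
          ∘ (fun ω => ((fun mr : Fin M × Fin R => π mr.1 mr.2 ω), ε ω))) μ :=
        Measure.map_map (MosaicAux.Psi_measurable hB hG H 1) hJm
    _ = Measure.map (fun ω => fun r => W r ω) μ := by
        rw [← htuple 1]
        simp only [Equiv.Perm.one_apply]
end

section
/- Let (S_0, S_1,…,S_R) be an exchangeable tuple of real random variables and define p_val = (1 + Σ_{r=1}^R 1{S_0 ≤ S_r})/(R+1). Then P(p_val ≤ α) ≤ α for every α ∈ (0,1). Moreover, if almost surely all of S_0,…,S_R are distinct, then p_val is uniformly distributed on the set {1/(R+1), 2/(R+1),…,1}. -/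
open MeasureTheory ProbabilityTheory ENNReal

namespace MosaicAux

open Classical in
noncomputable def G {R : ℕ} (x : Fin (R+1) → ℝ) (i : Fin (R+1)) : ℕ :=
  ((Finset.univ.erase i).filter (fun j => x i ≤ x j)).card

lemma G_le {R : ℕ} (x : Fin (R+1) → ℝ) (i : Fin (R+1)) : G x i ≤ R := by
  classical
  have h := Finset.card_le_card (Finset.filter_subset (fun j => x i ≤ x j) (Finset.univ.erase i))
  have h2 : (Finset.univ.erase i).card = R := by
    rw [Finset.card_erase_of_mem (Finset.mem_univ i)]
    simp
  unfold G
  omega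

lemma G_comp {R : ℕ} (x : Fin (R+1) → ℝ) (σ : Equiv.Perm (Fin (R+1))) (i : Fin (R+1)) :
    G (x ∘ σ) i = G x (σ i) := by
  classical
  unfold G
  apply Finset.card_bij (fun j _ => σ j)
  · intro a ha
    simp only [Finset.mem_filter, Finset.mem_erase, Finset.mem_univ, Function.comp] at *
    exact ⟨⟨fun h => ha.1.1 (σ.injective h), trivial⟩, ha.2⟩
  · intro a _ b _ h; exact σ.injective h
  · intro b hb
    simp only [Finset.mem_filter, Finset.mem_erase, Finset.mem_univ, Function.comp] at *
    refine ⟨σ.symm b, ⟨⟨fun h => hb.1.1 (by rw [← h, σ.apply_symm_apply]), trivial⟩,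
      by simpa [σ.apply_symm_apply] using hb.2⟩, σ.apply_symm_apply b⟩

lemma card_filter_le {R : ℕ} (m : ℕ) (x : Fin (R+1) → ℝ) :
    (Finset.univ.filter (fun i => G x i ≤ m)).card ≤ m + 1 := by
  classical
  set A := Finset.univ.filter (fun i => G x i ≤ m) with hA
  by_cases hne : A.Nonempty
  · obtain ⟨i, hiA, hmin⟩ := A.exists_min_image x hne
    have hsub : A.erase i ⊆ (Finset.univ.erase i).filter (fun j => x i ≤ x j) := by
      intro j hj
      rw [Finset.mem_erase] at hj
      simp only [Finset.mem_filter, Finset.mem_erase, Finset.mem_univ, and_true, true_and]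
      exact ⟨hj.1, hmin j hj.2⟩
    have hc := Finset.card_le_card hsub
    have hGi : G x i ≤ m := (Finset.mem_filter.mp hiA).2
    have hce : (A.erase i).card = A.card - 1 := Finset.card_erase_of_mem hiA
    have hApos : 0 < A.card := Finset.card_pos.mpr hne
    unfold G at hGi
    omega
  · rw [Finset.not_nonempty_iff_eq_empty] at hne
    rw [hne]; simp

lemma G_strict {R : ℕ} (x : Fin (R+1) → ℝ) {i j : Fin (R+1)} (hij : x i < x j) :
    G x j < G x i := by
  classical
  have hne : j ≠ i := fun h => absurd hij (by rw [h]; exact lt_irrefl _)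
  have hjmem : j ∈ (Finset.univ.erase i).filter (fun k => x i ≤ x k) := by
    simp only [Finset.mem_filter, Finset.mem_erase, Finset.mem_univ, and_true, true_and]
    exact ⟨hne, le_of_lt hij⟩
  have hsub : insert j ((Finset.univ.erase j).filter (fun k => x j ≤ x k)) ⊆
      (Finset.univ.erase i).filter (fun k => x i ≤ x k) := by
    intro k hk
    rcases Finset.mem_insert.mp hk with h | h
    · rw [h]; exact hjmem
    · simp only [Finset.mem_filter, Finset.mem_erase, Finset.mem_univ, and_true, true_and] at *
      have hik : x i < x k := lt_of_lt_of_le hij h.2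
      refine ⟨fun he => ?_, le_of_lt hik⟩
      rw [he] at hik; exact lt_irrefl _ hik
  have hjnot : j ∉ (Finset.univ.erase j).filter (fun k => x j ≤ x k) := by
    simp
  have := Finset.card_le_card hsub
  rw [Finset.card_insert_of_notMem hjnot] at this
  unfold G
  omega

lemma card_filter_eq_one {R : ℕ} (x : Fin (R+1) → ℝ) (hx : Function.Injective x)
    (k : ℕ) (hk : k ≤ R) :
    (Finset.univ.filter (fun i => G x i = k)).card = 1 := by
  classical
  have hGinj : Function.Injective (fun i => G x i) := by
    intro i j h
    by_contra hij
    rcases lt_trichotomy (x i) (x j) with hlt | heq | hgt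
    · exact absurd h (Nat.ne_of_gt (G_strict x hlt))
    · exact hij (hx heq)
    · exact absurd h (Ne.symm (Nat.ne_of_gt (G_strict x hgt)))
  set f : Fin (R+1) → Fin (R+1) := fun i => ⟨G x i, Nat.lt_succ_of_le (G_le x i)⟩ with hf
  have hfinj : Function.Injective f := by
    intro i j h
    apply hGinj
    simpa [hf, Fin.mk.injEq] using h
  have hfsurj : Function.Surjective f := Finite.surjective_of_injective hfinj
  obtain ⟨i₀, hi₀⟩ := hfsurj ⟨k, Nat.lt_succ_of_le hk⟩
  have hGi₀ : G x i₀ = k := by simpa [hf, Fin.mk.injEq] using hi₀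
  rw [Finset.card_eq_one]
  refine ⟨i₀, ?_⟩
  ext j
  simp only [Finset.mem_filter, Finset.mem_univ, true_and, Finset.mem_singleton]
  constructor
  · intro hj
    exact hGinj (by simp [hj, hGi₀])
  · intro hj; rw [hj]; exact hGi₀

lemma G_measurable {R : ℕ} (i : Fin (R+1)) :
    Measurable (fun x : Fin (R+1) → ℝ => G x i) := by
  classical
  have h : (fun x : Fin (R+1) → ℝ => G x i)
      = fun x => ∑ j ∈ Finset.univ.erase i, if x i ≤ x j then 1 else 0 := by
    funext x
    unfold G
    rw [Finset.card_filter]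
  rw [h]
  exact Finset.measurable_sum _ (fun j _ =>
    Measurable.ite (measurableSet_le (measurable_pi_apply i) (measurable_pi_apply j))
      measurable_const measurable_const)

lemma G_zero_cast {R : ℕ} (x : Fin (R+1) → ℝ) :
    (G x 0 : ℝ) = ∑ r : Fin R, if x 0 ≤ x r.succ then (1:ℝ) else 0 := by
  classical
  unfold G
  rw [Finset.card_filter]
  push_cast
  rw [Finset.sum_erase_eq_sub (Finset.mem_univ 0), Fin.sum_univ_succ]
  simp

lemma inj_measurable {R : ℕ} :
    MeasurableSet {x : Fin (R+1) → ℝ | Function.Injective x} := by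
  have h : {x : Fin (R+1) → ℝ | Function.Injective x}
      = ⋂ i, ⋂ j, {x | x i = x j → i = j} := by
    ext x
    simp only [Set.mem_setOf_eq, Set.mem_iInter, Function.Injective]
  rw [h]
  refine MeasurableSet.iInter (fun i => MeasurableSet.iInter (fun j => ?_))
  by_cases hij : i = j
  · subst hij
    have : {x : Fin (R+1) → ℝ | x i = x i → i = i} = Set.univ := by ext x; simp
    rw [this]; exact MeasurableSet.univ
  · have : {x : Fin (R+1) → ℝ | x i = x j → i = j} = {x | x i = x j}ᶜ := by
      ext x; simp [hij]
    rw [this]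
    exact (measurableSet_eq_fun (measurable_pi_apply i) (measurable_pi_apply j)).compl

end MosaicAux

open MosaicAux

/-- If `(S 0, S 1, …, S R)` is an exchangeable tuple of real random
variables and `p_val = (1 + #{r ≥ 1 : S 0 ≤ S r}) / (R+1)`, then `p_val` is superuniform:
`P(p_val ≤ α) ≤ α` for all `α ∈ (0,1)`. Moreover, if almost surely all the `S r` are
distinct, then `p_val` is uniformly distributed on `{1/(R+1), …, (R+1)/(R+1)}`. -/
theorem mosaic_pvalue_superuniform_and_uniform
    {Ω : Type*} [MeasurableSpace Ω] (μ : Measure Ω) [IsProbabilityMeasure μ]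
    (R : ℕ) (S : Fin (R + 1) → Ω → ℝ)
    (hmeas : ∀ r, Measurable (S r))
    (hexch : ∀ τ : Equiv.Perm (Fin (R + 1)),
      Measure.map (fun ω => fun r => S (τ r) ω) μ = Measure.map (fun ω => fun r => S r ω) μ)
    (pval : Ω → ℝ)
    (hpval : ∀ ω, pval ω =
      (1 + ∑ r : Fin R, if S 0 ω ≤ S r.succ ω then (1 : ℝ) else 0) / (R + 1)) :
    (∀ α ∈ Set.Ioo (0 : ℝ) 1, μ {ω | pval ω ≤ α} ≤ ENNReal.ofReal α) ∧
    ((∀ᵐ ω ∂μ, Function.Injective (fun r => S r ω)) →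
      ∀ k : Fin (R + 1), μ {ω | pval ω = ((k : ℕ) + 1 : ℝ) / (R + 1)} = 1 / (R + 1)) := by
  classical
  set F : Ω → Fin (R+1) → ℝ := fun ω r => S r ω with hF
  have hFmeas : Measurable F := measurable_pi_lambda _ (fun r => hmeas r)
  set ν : Measure (Fin (R+1) → ℝ) := Measure.map F μ with hν
  have hνprob : IsProbabilityMeasure ν := Measure.isProbabilityMeasure_map hFmeas.aemeasurable
  have hR1pos : (0:ℝ) < (R:ℝ) + 1 := by positivity
  have hR1ne : ((R:ℝ≥0∞) + 1) ≠ 0 := by simp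
  have hR1top : ((R:ℝ≥0∞) + 1) ≠ ⊤ := by simp
  -- pval in terms of G
  have hpvalG : ∀ ω, pval ω = (1 + (G (F ω) 0 : ℝ)) / ((R:ℝ) + 1) := by
    intro ω
    rw [hpval ω, G_zero_cast]
  -- invariance of ν under permutations
  have hinv : ∀ σ : Equiv.Perm (Fin (R+1)),
      Measure.map (fun x : Fin (R+1) → ℝ => x ∘ σ) ν = ν := by
    intro σ
    have hcm : Measurable (fun x : Fin (R+1) → ℝ => x ∘ σ) :=
      measurable_pi_lambda _ (fun r => measurable_pi_apply (σ r))
    rw [hν, Measure.map_map hcm hFmeas]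
    exact hexch σ
  -- equality of laws per index
  have hlaw : ∀ (p : ℕ → Prop) (_ : DecidablePred p) (i : Fin (R+1)),
      ν {x | p (G x i)} = ν {x | p (G x 0)} := by
    intro p _ i
    have hσ := hinv (Equiv.swap 0 i)
    set σ := Equiv.swap (0 : Fin (R+1)) i with hσdef
    have hset : (fun x : Fin (R+1) → ℝ => x ∘ σ) ⁻¹' {x | p (G x 0)} = {x | p (G x i)} := by
      ext x
      simp only [Set.mem_preimage, Set.mem_setOf_eq, G_comp]
      rw [hσdef, Equiv.swap_apply_left]
    have hcm : Measurable (fun x : Fin (R+1) → ℝ => x ∘ σ) :=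
      measurable_pi_lambda _ (fun r => measurable_pi_apply (σ r))
    have hms : MeasurableSet {x : Fin (R+1) → ℝ | p (G x 0)} :=
      G_measurable 0 (MeasurableSpace.measurableSet_top)
    calc ν {x | p (G x i)} = ν ((fun x => x ∘ σ) ⁻¹' {x | p (G x 0)}) := by rw [hset]
      _ = (Measure.map (fun x => x ∘ σ) ν) {x | p (G x 0)} := (Measure.map_apply hcm hms).symm
      _ = ν {x | p (G x 0)} := by rw [hσ]
  have hmsets : ∀ (p : ℕ → Prop) (i : Fin (R+1)),
      MeasurableSet {x : Fin (R+1) → ℝ | p (G x i)} :=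
    fun p i => G_measurable i (MeasurableSpace.measurableSet_top)
  have hmsets2 := hmsets
  -- key identity
  have hkey : ∀ (p : ℕ → Prop) (inst : DecidablePred p), ((R:ℝ≥0∞) + 1) * ν {x | p (G x 0)}
      = ∫⁻ x, ((@Finset.filter _ (fun i => p (G x i)) (fun i => inst (G x i)) Finset.univ).card : ℝ≥0∞) ∂ν := by
    intro p inst
    have hpt : ∀ x : Fin (R+1) → ℝ, ((@Finset.filter _ (fun i => p (G x i)) (fun i => inst (G x i)) Finset.univ).card : ℝ≥0∞)
        = ∑ i : Fin (R+1), Set.indicator {x | p (G x i)} (1 : (Fin (R+1) → ℝ) → ℝ≥0∞) x := by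
      intro x
      rw [Finset.card_filter]
      push_cast
      refine Finset.sum_congr rfl (fun i _ => ?_)
      by_cases h : p (G x i) <;> simp [Set.indicator_apply, h]
    calc ((R:ℝ≥0∞) + 1) * ν {x | p (G x 0)}
        = ∑ _i : Fin (R+1), ν {x | p (G x 0)} := by
          rw [Finset.sum_const, Finset.card_univ, Fintype.card_fin, nsmul_eq_mul]
          push_cast
          ring
      _ = ∑ i : Fin (R+1), ν {x | p (G x i)} :=
          (Finset.sum_congr rfl (fun i _ => (hlaw p inst i).symm))
      _ = ∑ i : Fin (R+1), ∫⁻ x, Set.indicator {x | p (G x i)} (1 : (Fin (R+1) → ℝ) → ℝ≥0∞) x ∂ν :=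
          (Finset.sum_congr rfl (fun i _ => (lintegral_indicator_one (hmsets p i)).symm))
      _ = ∫⁻ x, ∑ i : Fin (R+1), Set.indicator {x | p (G x i)} (1 : (Fin (R+1) → ℝ) → ℝ≥0∞) x ∂ν :=
          (lintegral_finset_sum _ (fun i _ =>
            (measurable_const.indicator (hmsets p i)))).symm
      _ = ∫⁻ x, ((@Finset.filter _ (fun i => p (G x i)) (fun i => inst (G x i)) Finset.univ).card : ℝ≥0∞) ∂ν := by
          refine lintegral_congr (fun x => ?_)
          rw [hpt x]
  constructor
  · -- superuniform
    intro α hα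
    obtain ⟨hα0, hα1⟩ := hα
    by_cases hlt : α * ((R:ℝ) + 1) < 1
    · have hempty : {ω | pval ω ≤ α} = ∅ := by
        ext ω
        simp only [Set.mem_setOf_eq, Set.mem_empty_iff_false, iff_false, not_le]
        rw [hpvalG ω, lt_div_iff₀ hR1pos]
        have : (0:ℝ) ≤ (G (F ω) 0 : ℝ) := Nat.cast_nonneg _
        linarith
      rw [hempty]
      simp
    · push_neg at hlt
      set t : ℝ := α * ((R:ℝ) + 1) with ht
      have htpos : 0 ≤ t := by positivity
      have hfl1 : 1 ≤ ⌊t⌋₊ := Nat.le_floor (by simpa using hlt)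
      set m : ℕ := ⌊t⌋₊ - 1 with hm
      have hm1 : (m + 1 : ℕ) = ⌊t⌋₊ := by omega
      have hsubset : {ω | pval ω ≤ α} ⊆ F ⁻¹' {x | G x 0 ≤ m} := by
        intro ω hω
        simp only [Set.mem_setOf_eq] at hω
        rw [hpvalG ω, div_le_iff₀ hR1pos] at hω
        have hcast : ((G (F ω) 0 + 1 : ℕ) : ℝ) ≤ t := by push_cast; linarith
        have := Nat.le_floor hcast
        simp only [Set.mem_preimage, Set.mem_setOf_eq]
        omega
      have hBmeas : MeasurableSet {x : Fin (R+1) → ℝ | G x 0 ≤ m} :=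
        hmsets (fun n => n ≤ m) 0
      have hbound : ((R:ℝ≥0∞) + 1) * ν {x | G x 0 ≤ m} ≤ ((m:ℝ≥0∞) + 1) := by
        rw [hkey (fun n => n ≤ m) (fun n => Nat.decLe n m)]
        calc ∫⁻ x, ((Finset.univ.filter (fun i => G x i ≤ m)).card : ℝ≥0∞) ∂ν
            ≤ ∫⁻ _x, ((m:ℝ≥0∞) + 1) ∂ν := by
              refine lintegral_mono (fun x => ?_)
              have := card_filter_le m x
              exact (by exact_mod_cast this : ((Finset.univ.filter (fun i => G x i ≤ m)).card : ℝ≥0∞) ≤ (m:ℝ≥0∞) + 1)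
          _ = (m:ℝ≥0∞) + 1 := by rw [lintegral_const, measure_univ, mul_one]
      have hmt : ((m:ℝ≥0∞) + 1) ≤ ENNReal.ofReal α * ((R:ℝ≥0∞) + 1) := by
        have h1 : ((m:ℝ) + 1) ≤ t := by
          have := Nat.floor_le htpos
          have : ((⌊t⌋₊ : ℕ) : ℝ) ≤ t := this
          rw [← hm1] at this
          push_cast at this
          linarith
        calc ((m:ℝ≥0∞) + 1) = ENNReal.ofReal ((m:ℝ) + 1) := by
              rw [ENNReal.ofReal_add (Nat.cast_nonneg m) zero_le_one]
              simp [ENNReal.ofReal_natCast]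
          _ ≤ ENNReal.ofReal t := ENNReal.ofReal_le_ofReal h1
          _ = ENNReal.ofReal α * ENNReal.ofReal ((R:ℝ) + 1) := by
              rw [ht, ENNReal.ofReal_mul hα0.le]
          _ = ENNReal.ofReal α * ((R:ℝ≥0∞) + 1) := by
              congr 1
              rw [ENNReal.ofReal_add (Nat.cast_nonneg R) zero_le_one]
              simp [ENNReal.ofReal_natCast]
      have hμν : μ (F ⁻¹' {x | G x 0 ≤ m}) = ν {x | G x 0 ≤ m} :=
        (Measure.map_apply hFmeas hBmeas).symm
      calc μ {ω | pval ω ≤ α} ≤ μ (F ⁻¹' {x | G x 0 ≤ m}) := measure_mono hsubset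
        _ = ν {x | G x 0 ≤ m} := hμν
        _ ≤ ENNReal.ofReal α := by
            have h2 : ((R:ℝ≥0∞) + 1) * ν {x | G x 0 ≤ m}
                ≤ ((R:ℝ≥0∞) + 1) * ENNReal.ofReal α := by
              calc ((R:ℝ≥0∞) + 1) * ν {x | G x 0 ≤ m} ≤ ((m:ℝ≥0∞) + 1) := hbound
                _ ≤ ENNReal.ofReal α * ((R:ℝ≥0∞) + 1) := hmt
                _ = ((R:ℝ≥0∞) + 1) * ENNReal.ofReal α := mul_comm _ _
            exact (ENNReal.mul_le_mul_iff_right hR1ne hR1top).mp h2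
  · -- uniform
    intro hinj k
    have hνinj : ∀ᵐ x ∂ν, Function.Injective x := by
      rw [hν, MeasureTheory.ae_map_iff hFmeas.aemeasurable inj_measurable]
      exact hinj
    have hkc : ∫⁻ x, ((Finset.univ.filter (fun i => G x i = (k:ℕ))).card : ℝ≥0∞) ∂ν = 1 := by
      have hae : ∀ᵐ x ∂ν,
          ((Finset.univ.filter (fun i => G x i = (k:ℕ))).card : ℝ≥0∞) = 1 := by
        refine hνinj.mono (fun x hx => ?_)
        rw [card_filter_eq_one x hx (k:ℕ) (Nat.lt_succ_iff.mp k.isLt)]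
        simp
      rw [lintegral_congr_ae hae, lintegral_one, measure_univ]
    have hone : ((R:ℝ≥0∞) + 1) * ν {x | G x 0 = (k:ℕ)} = 1 := by
      rw [hkey (fun n => n = (k:ℕ)) (fun n => instDecidableEqNat n (k:ℕ))]
      exact hkc
    have hνk : ν {x | G x 0 = (k:ℕ)} = ((R:ℝ≥0∞) + 1)⁻¹ := by
      have := congrArg (fun z => ((R:ℝ≥0∞) + 1)⁻¹ * z) hone
      simp only [← mul_assoc, ENNReal.inv_mul_cancel hR1ne hR1top, one_mul, mul_one] at this
      exact this
    have hsetE : {ω | pval ω = ((k:ℕ) + 1 : ℝ) / (R + 1)} = F ⁻¹' {x | G x 0 = (k:ℕ)} := by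
      ext ω
      simp only [Set.mem_setOf_eq, Set.mem_preimage]
      rw [hpvalG ω, div_eq_div_iff (ne_of_gt hR1pos) (ne_of_gt hR1pos)]
      constructor
      · intro h
        have h2 : (G (F ω) 0 : ℝ) = ((k:ℕ):ℝ) := by
          have := mul_right_cancel₀ (ne_of_gt hR1pos) h
          linarith
        exact_mod_cast h2
      · intro h
        rw [h]
        ring
    rw [hsetE, ← Measure.map_apply hFmeas (hmsets (fun n => n = (k:ℕ)) 0), ← hν, hνk, one_div]
end
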